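/- arXiv:1608.06968 — 4 statements merged into one kernel-verified Lean document; each statement's English description precedes it below -/
import Mathlib

section
/- For every integer n ≥ 1 let q_n be a probability measure on 𝒫_n (the set of non-increasing sequences of positive integers with sum n) and let q_∞ be a probability measure on 𝒫_∞ that gives full mass to the set of sequences with exactly one infinite part. Then q_n converges weakly to q_∞ with respect to d_𝒫 if and only if for every λ ∈ 𝒫_{<∞}, q_n({(n−‖λ‖, λ)}) → q_∞({(∞,λ)}) as n → ∞, where (n−‖λ‖, λ) denotes the partition of n whose parts are n−‖λ‖ together with the parts of λ (which is a non-increasing sequence for all n ≥ ‖λ‖ + λ₁) and (∞,λ) denotes the element of 𝒫_∞ whose parts are ∞ together with the parts of λ. -/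
/- Statement 3: for probability measures `q_n` on `𝒫_n` and `q_∞` on `𝒫_∞` giving full
mass to partitions with exactly one infinite part, weak convergence `q_n ⇒ q_∞` with
respect to `d_𝒫` is equivalent to `q_n({(n−‖λ‖, λ)}) → q_∞({(∞, λ)})` for every finite
partition `λ`. -/

open Filter MeasureTheory Topology

/-- `𝒫 = 𝒫_{<∞} ∪ 𝒫_∞`: finite non-increasing sequences with values in `ℕ ∪ {∞}`,
all of whose terms are positive. -/
def IntPartition : Type :=
  {l : List ℕ∞ // l.Pairwise (· ≥ ·) ∧ ∀ x ∈ l, 0 < x}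

namespace IntPartition

/-- The truncation `λ ∧ K` of a partition at level `K`. -/
noncomputable def trunc (l : IntPartition) (K : ℕ) : List ℕ∞ :=
  l.1.map fun x => min x (K : ℕ∞)

/-- The distance `d_𝒫(λ,μ) = exp(−inf{K ≥ 0 : λ∧K ≠ μ∧K})`, with `inf ∅ = +∞`. -/
noncomputable def dP (l m : IntPartition) : ℝ :=
  open scoped Classical in
  if {K : ℕ | trunc l K ≠ trunc m K} = ∅ then 0
  else Real.exp (-((sInf {K : ℕ | trunc l K ≠ trunc m K} : ℕ) : ℝ))

/-- On the countable space `𝒫` every subset is Borel, so we may use the discrete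
σ-algebra. -/
instance : MeasurableSpace IntPartition := ⊤

/-- A partition is finite (belongs to `𝒫_{<∞}`) if none of its parts is `∞`. -/
def IsFinitePart (l : IntPartition) : Prop := ∀ x ∈ l.1, x ≠ ⊤

instance : Countable IntPartition :=
  inferInstanceAs (Countable {l : List ℕ∞ // l.Pairwise (· ≥ ·) ∧ ∀ x ∈ l, 0 < x})

instance : MeasurableSingletonClass IntPartition :=
  ⟨fun _ => MeasurableSpace.measurableSet_top⟩

lemma measSet (s : Set IntPartition) : MeasurableSet s := MeasurableSpace.measurableSet_top

lemma ext' {l m : IntPartition} (h : l.1 = m.1) : l = m := Subtype.ext h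

lemma trunc_mono {l m : IntPartition} {K K' : ℕ} (h : K ≤ K')
    (he : trunc l K' = trunc m K') : trunc l K = trunc m K := by
  have hmin : ∀ x : ℕ∞, min (min x (K':ℕ∞)) (K:ℕ∞) = min x (K:ℕ∞) := by
    intro x
    rw [min_assoc]
    congr 1
    exact min_eq_right (by exact_mod_cast h)
  have h1 : ∀ (p : IntPartition), (trunc p K').map (fun x => min x (K:ℕ∞)) = trunc p K := by
    intro p
    simp only [trunc, List.map_map, Function.comp]
    exact List.map_congr_left (fun x _ => hmin x)
  rw [← h1 l, ← h1 m, he]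

section Dist
variable [MetricSpace IntPartition] (hdist : ∀ a b : IntPartition, dist a b = dP a b)

include hdist in
lemma dist_lt_iff (l m : IntPartition) (K : ℕ) :
    dist l m < Real.exp (-(K:ℝ)) ↔ trunc l K = trunc m K := by
  rw [hdist]
  unfold dP
  set S := {K : ℕ | trunc l K ≠ trunc m K} with hS
  by_cases hE : S = ∅
  · simp only [hE, if_pos rfl]
    constructor
    · intro _
      by_contra hne
      have : K ∈ S := hne
      rw [hE] at this; exact this
    · intro _; exact Real.exp_pos _
  · rw [if_neg hE]
    have hne : S.Nonempty := Set.nonempty_iff_ne_empty.2 hE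
    have hmem : sInf S ∈ S := Nat.sInf_mem hne
    rw [Real.exp_lt_exp, neg_lt_neg_iff]
    constructor
    · intro h
      by_contra hK
      have hKS : K ∈ S := hK
      have h2 : ((sInf S : ℕ) : ℝ) ≤ (K : ℝ) := by exact_mod_cast Nat.sInf_le hKS
      linarith
    · intro hK
      have : K < sInf S := by
        by_contra hle
        push_neg at hle
        exact hmem (trunc_mono hle hK)
      exact_mod_cast this

include hdist in
lemma isClopen_cyl (K : ℕ) (c : List ℕ∞) : IsClopen {m : IntPartition | trunc m K = c} := by
  constructor
  · rw [← isOpen_compl_iff, Metric.isOpen_iff]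
    intro m hm
    refine ⟨Real.exp (-(K:ℝ)), Real.exp_pos _, fun m' hm' => ?_⟩
    rw [Metric.mem_ball] at hm'
    have := (dist_lt_iff hdist m' m K).1 hm'
    intro hc
    exact hm (by rw [Set.mem_setOf_eq, ← this]; exact hc)
  · rw [Metric.isOpen_iff]
    intro m hm
    refine ⟨Real.exp (-(K:ℝ)), Real.exp_pos _, fun m' hm' => ?_⟩
    rw [Metric.mem_ball] at hm'
    have := (dist_lt_iff hdist m' m K).1 hm'
    rw [Set.mem_setOf_eq, this]
    exact hm
end Dist

lemma map_min_eq_self {L : List ℕ∞} {K : ℕ} (h : ∀ p ∈ L, p < (K:ℕ∞)) :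
    L.map (fun x => min x (K:ℕ∞)) = L :=
  (List.map_congr_left fun x hx => min_eq_left (h x hx).le).trans (List.map_id L)

lemma eq_of_map_min {K : ℕ} : ∀ {t u : List ℕ∞}, t.map (fun x => min x (K:ℕ∞)) = u →
    (∀ p ∈ u, p < (K:ℕ∞)) → t = u := by
  intro t
  induction t with
  | nil => intro u h _; simpa using h
  | cons x xs ih =>
    intro u h hu
    subst h
    simp only [List.map_cons] at hu ⊢
    have hx : min x (K:ℕ∞) < (K:ℕ∞) := hu _ (by simp)
    have hxK : x < (K:ℕ∞) := by
      rcases le_total x (K:ℕ∞) with h1 | h1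
      · rwa [min_eq_left h1] at hx
      · rw [min_eq_right h1] at hx; exact absurd hx (lt_irrefl _)
    rw [min_eq_left hxK.le]
    congr 1
    exact ih rfl fun p hp => hu p (by simp [hp])

lemma top_head {L : List ℕ∞} (hs : L.Pairwise (· ≥ ·)) (h : L.count (⊤:ℕ∞) = 1) :
    ∃ t, L = (⊤:ℕ∞) :: t ∧ (⊤:ℕ∞) ∉ t := by
  have hmem : (⊤:ℕ∞) ∈ L := List.count_pos_iff.1 (by omega)
  cases L with
  | nil => simp at hmem
  | cons hd tl =>
    rw [List.pairwise_cons] at hs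
    have htl : (⊤:ℕ∞) ∉ tl := by
      intro hmt
      have hhd : hd = (⊤:ℕ∞) := top_le_iff.1 (hs.1 _ hmt)
      have h1 : 1 ≤ tl.count (⊤:ℕ∞) := List.count_pos_iff.2 hmt
      rw [List.count_cons] at h
      simp only [hhd, beq_self_eq_true, if_true] at h
      omega
    have hhd : hd = (⊤:ℕ∞) := by
      rcases List.mem_cons.1 hmem with h' | h'
      · exact h'.symm
      · exact absurd h' htl
    exact ⟨tl, by rw [hhd], htl⟩

lemma sum_ne_top {L : List ℕ∞} (h : ∀ x ∈ L, x ≠ ⊤) : L.sum ≠ ⊤ := by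
  induction L with
  | nil => simp
  | cons x xs ih =>
    rw [List.sum_cons, ne_eq, ENat.add_eq_top, not_or]
    exact ⟨h x (by simp), ih fun y hy => h y (by simp [hy])⟩

/-- the partition `(∞, λ)` -/
def consTop (lam : IntPartition) : IntPartition :=
  ⟨(⊤:ℕ∞) :: lam.1, List.pairwise_cons.2 ⟨fun _ _ => le_top, lam.2.1⟩,
    by
      intro x hx
      rcases List.mem_cons.1 hx with h | h
      · subst h; exact WithTop.top_pos
      · exact lam.2.2 x h⟩

lemma trunc_consTop (lam : IntPartition) {K : ℕ} (hK : ∀ p ∈ lam.1, p < (K:ℕ∞)) :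
    trunc (consTop lam) K = (K:ℕ∞) :: lam.1 := by
  show ((⊤:ℕ∞) :: lam.1).map (fun x => min x (K:ℕ∞)) = _
  rw [List.map_cons, min_eq_right le_top, map_min_eq_self hK]

lemma count_top_cons (lam : IntPartition) (hlam : IsFinitePart lam) :
    ((⊤:ℕ∞) :: lam.1).count (⊤:ℕ∞) = 1 := by
  rw [List.count_cons]
  simp only [beq_self_eq_true, if_true]
  rw [List.count_eq_zero.2 fun h => hlam ⊤ h rfl]

lemma singleton_T (lam : IntPartition) :
    {l : IntPartition | l.1 = (⊤:ℕ∞) :: lam.1} = {consTop lam} := by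
  ext l
  simp only [Set.mem_setOf_eq, Set.mem_singleton_iff]
  exact ⟨fun h => ext' h, fun h => by rw [h]; rfl⟩

lemma cyl_inter_suppinf (lam : IntPartition) (hlam : IsFinitePart lam) {K : ℕ}
    (hK : ∀ p ∈ lam.1, p < (K:ℕ∞)) :
    {m : IntPartition | trunc m K = (K:ℕ∞) :: lam.1} ∩ {l | l.1.count (⊤:ℕ∞) = 1}
      = {l : IntPartition | l.1 = (⊤:ℕ∞) :: lam.1} := by
  ext m
  simp only [Set.mem_inter_iff, Set.mem_setOf_eq]
  constructor
  · rintro ⟨hc, hcount⟩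
    obtain ⟨t, ht, htop⟩ := top_head m.2.1 hcount
    show m.1 = _
    rw [ht]
    have hc' : ((⊤:ℕ∞) :: t).map (fun x => min x (K:ℕ∞)) = (K:ℕ∞) :: lam.1 := by
      rw [← ht]; exact hc
    rw [List.map_cons, min_eq_right le_top] at hc'
    obtain ⟨-, h2⟩ := List.cons_eq_cons.1 hc'
    rw [eq_of_map_min h2 hK]
  · intro h
    have h' : m.1 = (⊤:ℕ∞) :: lam.1 := h
    constructor
    · show m.1.map (fun x => min x (K:ℕ∞)) = _
      rw [h', List.map_cons, min_eq_right le_top, map_min_eq_self hK]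
    · show m.1.count (⊤:ℕ∞) = 1
      rw [h']
      exact count_top_cons lam hlam

lemma cyl_inter_supp (lam : IntPartition) (hlam : IsFinitePart lam) {K n : ℕ}
    (hK : ∀ p ∈ lam.1, p < (K:ℕ∞)) (hn : lam.1.sum + (K:ℕ∞) ≤ (n:ℕ∞)) :
    {m : IntPartition | trunc m K = (K:ℕ∞) :: lam.1}
        ∩ {l : IntPartition | IsFinitePart l ∧ l.1.sum = (n:ℕ∞)}
      = {l : IntPartition | l.1 = ((n:ℕ∞) - lam.1.sum) :: lam.1}
        ∩ {l : IntPartition | IsFinitePart l ∧ l.1.sum = (n:ℕ∞)} := by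
  have hsne : lam.1.sum ≠ ⊤ := sum_ne_top hlam
  obtain ⟨sn, hs⟩ : ∃ sn : ℕ, lam.1.sum = (sn : ℕ∞) := by
    lift lam.1.sum to ℕ using hsne with sn hsn
    exact ⟨sn, rfl⟩
  have hsnK : sn + K ≤ n := by
    rw [hs] at hn
    exact_mod_cast hn
  have hsub : (n:ℕ∞) - lam.1.sum = ((n - sn : ℕ) : ℕ∞) := by
    rw [hs, ← ENat.coe_sub]
  ext m
  simp only [Set.mem_inter_iff, Set.mem_setOf_eq]
  constructor
  · rintro ⟨hc, hfin, hsum⟩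
    refine ⟨?_, hfin, hsum⟩
    rcases hm : m.1 with - | ⟨x, t⟩
    · exfalso
      have : m.1.map (fun x => min x (K:ℕ∞)) = (K:ℕ∞) :: lam.1 := hc
      rw [hm] at this
      simp at this
    · have hc' : (x :: t).map (fun y => min y (K:ℕ∞)) = (K:ℕ∞) :: lam.1 := by
        rw [← hm]; exact hc
      rw [List.map_cons] at hc'
      obtain ⟨h1, h2⟩ := List.cons_eq_cons.1 hc'
      have ht : t = lam.1 := eq_of_map_min h2 hK
      have hxne : x ≠ ⊤ := hfin x (by rw [hm]; exact List.mem_cons_self)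
      lift x to ℕ using hxne with xn hxn
      have hsum' : (xn : ℕ∞) + (sn : ℕ∞) = (n:ℕ∞) := by
        have := hsum
        rw [hm, List.sum_cons, ht, hs] at this
        exact this
      have hxs : xn + sn = n := by exact_mod_cast hsum'
      rw [ht, hsub]
      congr 2
      omega
  · rintro ⟨hA, hfin, hsum⟩
    refine ⟨?_, hfin, hsum⟩
    show m.1.map (fun x => min x (K:ℕ∞)) = _
    rw [hA, List.map_cons, map_min_eq_self hK]
    congr 1
    rw [hsub]
    rw [min_eq_right]
    exact_mod_cast Nat.le_sub_of_add_le (by omega)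

lemma integrable_bcf [MetricSpace IntPartition] (μ : Measure IntPartition) [IsFiniteMeasure μ]
    (f : BoundedContinuousFunction IntPartition ℝ) : Integrable (⇑f) μ := by
  refine Integrable.mono' (integrable_const ‖f‖) measurable_from_top.aestronglyMeasurable ?_
  exact Eventually.of_forall fun x => f.norm_coe_le_norm x


lemma set_eq_singleton {c : List ℕ∞} (a : IntPartition) (ha : a.1 = c) :
    {l : IntPartition | l.1 = c} = {a} := by
  ext l
  simp only [Set.mem_setOf_eq, Set.mem_singleton_iff]
  exact ⟨fun h => ext' (h.trans ha.symm), fun h => by rw [h, ha]⟩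

lemma exists_K_list : ∀ (L : List ℕ∞), (∀ x ∈ L, x ≠ ⊤) →
    ∃ K : ℕ, 1 ≤ K ∧ ∀ p ∈ L, p < (K:ℕ∞) := by
  intro L
  induction L with
  | nil => exact fun _ => ⟨1, le_refl 1, by simp⟩
  | cons x t ih =>
    intro h
    obtain ⟨K, hK1, hK⟩ := ih fun y hy => h y (List.mem_cons_of_mem _ hy)
    have hx : x ≠ ⊤ := h x (List.mem_cons_self)
    lift x to ℕ using hx with xn
    refine ⟨max K (xn+1), le_trans hK1 (le_max_left _ _), ?_⟩
    intro p hp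
    rcases List.mem_cons.1 hp with rfl | hp
    · exact_mod_cast lt_of_lt_of_le (Nat.lt_succ_self xn) (le_max_right K (xn+1))
    · exact lt_of_lt_of_le (hK p hp) (by exact_mod_cast le_max_left K (xn+1))

lemma exists_K (lam : IntPartition) (hlam : IsFinitePart lam) :
    ∃ K : ℕ, 1 ≤ K ∧ ∀ p ∈ lam.1, p < (K:ℕ∞) :=
  exists_K_list lam.1 hlam

lemma K_le_sub (lam : IntPartition) (hlam : IsFinitePart lam) {K n : ℕ}
    (hn : lam.1.sum + (K:ℕ∞) ≤ (n:ℕ∞)) : (K:ℕ∞) ≤ (n:ℕ∞) - lam.1.sum := by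
  have hsne := sum_ne_top hlam
  obtain ⟨sn, hs⟩ : ∃ sn : ℕ, lam.1.sum = (sn : ℕ∞) := by
    lift lam.1.sum to ℕ using hsne with sn hsn
    exact ⟨sn, rfl⟩
  rw [hs] at hn ⊢
  have h : sn + K ≤ n := by exact_mod_cast hn
  rw [← ENat.coe_sub]
  exact_mod_cast Nat.le_sub_of_add_le (by omega)

lemma exists_A (lam : IntPartition) (hlam : IsFinitePart lam) {K n : ℕ} (hK1 : 1 ≤ K)
    (hK : ∀ p ∈ lam.1, p < (K:ℕ∞)) (hn : lam.1.sum + (K:ℕ∞) ≤ (n:ℕ∞)) :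
    ∃ a : IntPartition, a.1 = ((n:ℕ∞) - lam.1.sum) :: lam.1
      ∧ trunc a K = (K:ℕ∞) :: lam.1 := by
  have hKv : (K:ℕ∞) ≤ (n:ℕ∞) - lam.1.sum := K_le_sub lam hlam hn
  refine ⟨⟨((n:ℕ∞) - lam.1.sum) :: lam.1, ?_, ?_⟩, rfl, ?_⟩
  · rw [List.pairwise_cons]
    exact ⟨fun b hb => le_trans (hK b hb).le hKv, lam.2.1⟩
  · intro x hx
    rcases List.mem_cons.1 hx with rfl | hx
    · exact lt_of_lt_of_le (by exact_mod_cast hK1) hKv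
    · exact lam.2.2 x hx
  · show (((n:ℕ∞) - lam.1.sum) :: lam.1).map (fun x => min x (K:ℕ∞)) = _
    rw [List.map_cons, map_min_eq_self hK, min_eq_right hKv]

/-- finite partitions -/
def FinP : Type := {p : IntPartition // IsFinitePart p}

instance : Countable FinP := inferInstanceAs (Countable {p : IntPartition // IsFinitePart p})

/-- `(∞, λ)` as a map on finite partitions -/
noncomputable def phi (p : FinP) : IntPartition := consTop p.1

lemma phi_val (p : FinP) : (phi p).1 = (⊤:ℕ∞) :: p.1.1 := rfl

lemma phi_inj : Function.Injective phi := by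
  intro p q h
  have h1 : (⊤:ℕ∞) :: p.1.1 = (⊤:ℕ∞) :: q.1.1 := by
    rw [← phi_val, ← phi_val, h]
  exact Subtype.ext (ext' (List.cons_eq_cons.1 h1).2)

lemma suppinf_eq_iUnion :
    {l : IntPartition | l.1.count (⊤:ℕ∞) = 1} = ⋃ p : FinP, {phi p} := by
  ext l
  simp only [Set.mem_setOf_eq, Set.mem_iUnion, Set.mem_singleton_iff]
  constructor
  · intro h
    obtain ⟨t, ht, htop⟩ := top_head l.2.1 h
    have hsort : t.Pairwise (· ≥ ·) := by
      have := l.2.1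
      rw [ht, List.pairwise_cons] at this
      exact this.2
    have hpos : ∀ x ∈ t, 0 < x := fun x hx => l.2.2 x (by rw [ht]; exact List.mem_cons_of_mem _ hx)
    refine ⟨⟨⟨t, hsort, hpos⟩, fun x hx hxt => htop (hxt ▸ hx)⟩, ?_⟩
    exact ext' (by rw [ht]; rfl)
  · rintro ⟨p, rfl⟩
    exact count_top_cons p.1 p.2

lemma pairwise_phi : Pairwise (Function.onFun Disjoint fun p : FinP => ({phi p} : Set IntPartition)) :=
  fun _ _ hpq => Set.disjoint_singleton.2 fun h => hpq (phi_inj h)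

lemma sum_meas_le (μ : Measure IntPartition) [IsProbabilityMeasure μ] {ι : Type}
    (F : Finset ι) (A : ι → Set IntPartition)
    (hdisj : (↑F : Set ι).Pairwise (Function.onFun Disjoint A)) :
    ∑ p ∈ F, (μ (A p)).toReal ≤ 1 := by
  have h1 : μ (⋃ p ∈ F, A p) = ∑ p ∈ F, μ (A p) :=
    measure_biUnion_finset hdisj fun p _ => measSet _
  have h2 : (μ (⋃ p ∈ F, A p)).toReal ≤ 1 := by
    rw [show (1:ℝ) = (μ Set.univ).toReal by simp]
    exact ENNReal.toReal_mono (measure_ne_top _ _) (measure_mono (Set.subset_univ _))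
  rw [h1, ENNReal.toReal_sum (fun p _ => measure_ne_top _ _)] at h2
  exact h2

lemma integral_bound [MetricSpace IntPartition] (μ : Measure IntPartition)
    [IsProbabilityMeasure μ] (f : BoundedContinuousFunction IntPartition ℝ) {ι : Type}
    (F : Finset ι) (A : ι → Set IntPartition)
    (hdisj : (↑F : Set ι).Pairwise (Function.onFun Disjoint A)) :
    |∫ x, f x ∂μ - ∑ p ∈ F, ∫ x in A p, f x ∂μ|
      ≤ ‖f‖ * (1 - ∑ p ∈ F, (μ (A p)).toReal) := by
  set U := ⋃ p ∈ F, A p with hU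
  have hmeasU : MeasurableSet U := measSet U
  have hint : Integrable (⇑f) μ := integrable_bcf μ f
  have hsplit : ∫ x in U, f x ∂μ + ∫ x in Uᶜ, f x ∂μ = ∫ x, f x ∂μ :=
    integral_add_compl hmeasU hint
  have hUsum : ∫ x in U, f x ∂μ = ∑ p ∈ F, ∫ x in A p, f x ∂μ :=
    integral_biUnion_finset F (fun p _ => measSet _) hdisj (fun p _ => hint.integrableOn)
  have hmeasUR : (μ U).toReal = ∑ p ∈ F, (μ (A p)).toReal := by
    rw [measure_biUnion_finset hdisj fun p _ => measSet _,
      ENNReal.toReal_sum fun p _ => measure_ne_top _ _]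
  have hcompl : (μ Uᶜ).toReal = 1 - (μ U).toReal := by
    have hadd : μ U + μ Uᶜ = 1 := by
      rw [measure_add_measure_compl hmeasU, measure_univ]
    have := congrArg ENNReal.toReal hadd
    rw [ENNReal.toReal_add (measure_ne_top _ _) (measure_ne_top _ _)] at this
    simp only [ENNReal.toReal_one] at this
    linarith
  have hbound : ‖∫ x in Uᶜ, f x ∂μ‖ ≤ ‖f‖ * (μ Uᶜ).toReal :=
    norm_setIntegral_le_of_norm_le_const (measure_lt_top _ _)
      (fun x _ => f.norm_coe_le_norm x)
  have heq : ∫ x, f x ∂μ - ∑ p ∈ F, ∫ x in A p, f x ∂μ = ∫ x in Uᶜ, f x ∂μ := by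
    rw [← hUsum]; linarith
  rw [heq, hcompl, hmeasUR] at *
  calc |∫ x in Uᶜ, f x ∂μ| ≤ ‖f‖ * (1 - ∑ p ∈ F, (μ (A p)).toReal) := by
        rw [← Real.norm_eq_abs]; exact hbound


/-- Weak convergence (with respect to the topology of `d_𝒫`) of probability measures
`q_n` supported by `𝒫_n` towards a probability measure `q_∞` charging only partitions
with a single infinite part holds if and only if, for every finite partition `λ`,
`q_n({(n−‖λ‖, λ)}) → q_∞({(∞, λ)})`.  Here `(v, λ)` is the partition whose list of
parts is `v` followed by the parts of `λ` (for `n ≥ ‖λ‖ + λ₁` this is the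
non-increasing rearrangement; for smaller `n` the corresponding singleton is empty,
which does not affect the limit). -/
theorem weak_convergence_iff [inst : MetricSpace IntPartition]
    (hdist : ∀ a b : IntPartition, dist a b = dP a b)
    (q : ℕ → Measure IntPartition) (qinf : Measure IntPartition)
    [∀ n, IsProbabilityMeasure (q n)] [IsProbabilityMeasure qinf]
    (hsupp : ∀ n : ℕ, 1 ≤ n →
      q n {l : IntPartition | IsFinitePart l ∧ l.1.sum = (n : ℕ∞)} = 1)
    (hsuppinf : qinf {l : IntPartition | l.1.count (⊤ : ℕ∞) = 1} = 1) :
    (∀ f : BoundedContinuousFunction IntPartition ℝ,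
        Tendsto (fun n => ∫ x, f x ∂(q n)) atTop (𝓝 (∫ x, f x ∂qinf)))
      ↔ (∀ lam : IntPartition, IsFinitePart lam →
          Tendsto
            (fun n => (q n {l : IntPartition | l.1 = ((n : ℕ∞) - lam.1.sum) :: lam.1}).toReal)
            atTop
            (𝓝 ((qinf {l : IntPartition | l.1 = (⊤ : ℕ∞) :: lam.1}).toReal))) := by
  constructor
  · intro hweak lam hlam
    obtain ⟨K, hK1, hK⟩ := exists_K lam hlam
    set C := {m : IntPartition | trunc m K = (K:ℕ∞) :: lam.1} with hC
    have hclopen : IsClopen C := isClopen_cyl hdist K _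
    set g : IntPartition → ℝ := C.indicator 1 with hg
    have hgc : Continuous g := by
      have h1 : g = (fun b : Bool => if b then (1:ℝ) else 0) ∘ C.boolIndicator := by
        funext x
        by_cases hx : x ∈ C <;>
          simp [hg, Set.indicator, Set.boolIndicator, hx]
      rw [h1]
      exact Continuous.comp continuous_of_discreteTopology
        ((continuous_boolIndicator_iff_isClopen C).2 hclopen)
    have hgb : ∀ x, ‖g x‖ ≤ 1 := by
      intro x
      by_cases hx : x ∈ C <;> simp [hg, Set.indicator, hx]
    set F : BoundedContinuousFunction IntPartition ℝ :=
      BoundedContinuousFunction.ofNormedAddCommGroup g hgc 1 hgb with hF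
    have hFval : ∀ (μ : Measure IntPartition), ∫ x, F x ∂μ = (μ C).toReal := by
      intro μ
      have : (fun x => F x) = fun x => C.indicator 1 x := rfl
      rw [this]
      exact integral_indicator_one (measSet C)
    have h1 := hweak F
    simp only [hFval] at h1
    have hTeq : qinf C = qinf {l : IntPartition | l.1 = (⊤:ℕ∞) :: lam.1} := by
      have hcompl : qinf {l : IntPartition | l.1.count (⊤:ℕ∞) = 1}ᶜ = 0 :=
        (prob_compl_eq_zero_iff (measSet _)).2 hsuppinf
      rw [← measure_inter_conull (s := C) hcompl, hC, cyl_inter_suppinf lam hlam hK]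
    rw [hTeq] at h1
    refine Tendsto.congr' ?_ h1
    set sn := lam.1.sum.toNat with hsn
    have hs : lam.1.sum = ((sn : ℕ) : ℕ∞) := (ENat.coe_toNat (sum_ne_top hlam)).symm
    filter_upwards [eventually_ge_atTop (max 1 (sn + K))] with n hn
    have hn1 : 1 ≤ n := le_trans (le_max_left _ _) hn
    have hnsK : sn + K ≤ n := le_trans (le_max_right _ _) hn
    have hnE : lam.1.sum + (K:ℕ∞) ≤ (n:ℕ∞) := by
      rw [hs]
      exact_mod_cast hnsK
    have hcompln : q n {l : IntPartition | IsFinitePart l ∧ l.1.sum = (n:ℕ∞)}ᶜ = 0 :=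
      (prob_compl_eq_zero_iff (measSet _)).2 (hsupp n hn1)
    have hkey := cyl_inter_supp lam hlam hK hnE
    calc (q n C).toReal
        = (q n (C ∩ {l : IntPartition | IsFinitePart l ∧ l.1.sum = (n:ℕ∞)})).toReal := by
          rw [measure_inter_conull hcompln]
      _ = (q n ({l : IntPartition | l.1 = ((n:ℕ∞) - lam.1.sum) :: lam.1}
            ∩ {l : IntPartition | IsFinitePart l ∧ l.1.sum = (n:ℕ∞)})).toReal := by
          rw [hC]
          rw [hkey]
      _ = (q n {l : IntPartition | l.1 = ((n:ℕ∞) - lam.1.sum) :: lam.1}).toReal := by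
          rw [measure_inter_conull hcompln]
  · intro hsing f
    set pr : FinP → ℝ := fun p => (qinf {phi p}).toReal with hpr
    have htsum : ∑' p : FinP, qinf {phi p} = 1 := by
      rw [← measure_iUnion pairwise_phi fun p => measSet _, ← suppinf_eq_iUnion, hsuppinf]
    have hsummable : Summable pr :=
      ENNReal.summable_toReal (by rw [htsum]; exact ENNReal.one_ne_top)
    have hprsum : ∑' p, pr p = 1 := by
      rw [hpr, ← ENNReal.tsum_toReal_eq fun p => measure_ne_top _ _, htsum, ENNReal.toReal_one]
    have hhs : HasSum pr 1 := hprsum ▸ hsummable.hasSum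
    have hm : ∀ p : FinP, Tendsto
        (fun n => (q n {l : IntPartition | l.1 = ((n:ℕ∞) - p.1.1.sum) :: p.1.1}).toReal)
        atTop (𝓝 (pr p)) := by
      intro p
      have h := hsing p.1 p.2
      rwa [show {l : IntPartition | l.1 = (⊤:ℕ∞) :: p.1.1} = {phi p} from
        set_eq_singleton _ (phi_val p)] at h
    have hA : ∀ p : FinP, Tendsto
        (fun n => ∫ x in {l : IntPartition | l.1 = ((n:ℕ∞) - p.1.1.sum) :: p.1.1}, f x ∂(q n))
        atTop (𝓝 (pr p * f (phi p))) := by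
      intro p
      rw [Metric.tendsto_atTop]
      intro δ hδ
      obtain ⟨ρ, hρpos, hball⟩ : ∃ ρ > 0, ∀ x : IntPartition, dist x (phi p) < ρ →
          |f x - f (phi p)| < δ/4 := by
        obtain ⟨ρ, hρ, h⟩ := Metric.continuous_iff.1 f.continuous (phi p) (δ/4) (by linarith)
        exact ⟨ρ, hρ, fun x hx => by have := h x hx; rwa [Real.dist_eq] at this⟩
      obtain ⟨K0, hK01, hK0⟩ := exists_K p.1 p.2
      obtain ⟨K, hKK, hexp⟩ : ∃ K : ℕ, K0 ≤ K ∧ Real.exp (-(K:ℝ)) < ρ := by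
        have h1 : Tendsto (fun K : ℕ => Real.exp (-(K:ℝ))) atTop (𝓝 0) :=
          Real.tendsto_exp_neg_atTop_nhds_zero.comp tendsto_natCast_atTop_atTop
        obtain ⟨K, hK⟩ := ((h1.eventually (eventually_lt_nhds hρpos)).and
          (eventually_ge_atTop K0)).exists
        exact ⟨K, hK.2, hK.1⟩
      have hK1 : 1 ≤ K := le_trans hK01 hKK
      have hKp : ∀ x ∈ p.1.1, x < (K:ℕ∞) := fun x hx =>
        lt_of_lt_of_le (hK0 x hx) (by exact_mod_cast hKK)
      set sn := p.1.1.sum.toNat with hsn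
      have hsum_eq : p.1.1.sum = ((sn:ℕ):ℕ∞) := (ENat.coe_toNat (sum_ne_top p.2)).symm
      have hMp : |f (phi p)| ≤ ‖f‖ := by
        rw [← Real.norm_eq_abs]; exact f.norm_coe_le_norm _
      have hδ4 : 0 < δ / (4 * (‖f‖ + 1)) := by positivity
      obtain ⟨N1, hN1⟩ := (Metric.tendsto_atTop.1 (hm p)) (δ / (4 * (‖f‖ + 1))) hδ4
      refine ⟨max N1 (sn + K), fun n hn => ?_⟩
      have hn1 : N1 ≤ n := le_trans (le_max_left _ _) hn
      have hn2 : sn + K ≤ n := le_trans (le_max_right _ _) hn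
      have hnE : p.1.1.sum + (K:ℕ∞) ≤ (n:ℕ∞) := by
        rw [hsum_eq]; exact_mod_cast hn2
      obtain ⟨a, ha, hatr⟩ := exists_A p.1 p.2 hK1 hKp hnE
      have hset : {l : IntPartition | l.1 = ((n:ℕ∞) - p.1.1.sum) :: p.1.1} = {a} :=
        set_eq_singleton a ha
      have hdista : dist a (phi p) < ρ := by
        have htr : trunc a K = trunc (phi p) K := by
          rw [hatr]
          exact (trunc_consTop p.1 hKp).symm
        exact lt_trans ((dist_lt_iff hdist a (phi p) K).2 htr) hexp
      have hfa : |f a - f (phi p)| < δ/4 := hball a hdista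
      set mn := (q n {l : IntPartition | l.1 = ((n:ℕ∞) - p.1.1.sum) :: p.1.1}).toReal with hmn
      have hint_eq : ∫ x in {l : IntPartition | l.1 = ((n:ℕ∞) - p.1.1.sum) :: p.1.1},
          f x ∂(q n) = mn * f a := by
        rw [hmn, hset, integral_singleton, smul_eq_mul, measureReal_def]
      have hmn1 : mn ≤ 1 := by
        rw [hmn, show (1:ℝ) = ((q n) Set.univ).toReal by simp]
        exact ENNReal.toReal_mono (measure_ne_top _ _) (measure_mono (Set.subset_univ _))
      have hmn0 : 0 ≤ mn := ENNReal.toReal_nonneg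
      have hmnpr : |mn - pr p| < δ / (4 * (‖f‖ + 1)) := by
        have h := hN1 n hn1
        rwa [Real.dist_eq] at h
      rw [Real.dist_eq, hint_eq]
      have hfnorm : 0 ≤ ‖f‖ := norm_nonneg f
      calc |mn * f a - pr p * f (phi p)|
          = |mn * (f a - f (phi p)) + (mn - pr p) * f (phi p)| := by ring_nf
        _ ≤ |mn * (f a - f (phi p))| + |(mn - pr p) * f (phi p)| := abs_add_le _ _
        _ = mn * |f a - f (phi p)| + |mn - pr p| * |f (phi p)| := by
            rw [abs_mul, abs_mul, abs_of_nonneg hmn0]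
        _ ≤ 1 * (δ/4) + (δ / (4 * (‖f‖ + 1))) * (‖f‖ + 1) := by
            have h1 : mn * |f a - f (phi p)| ≤ 1 * (δ/4) :=
              mul_le_mul hmn1 hfa.le (abs_nonneg _) one_pos.le
            have h2 : |mn - pr p| * |f (phi p)| ≤ (δ / (4 * (‖f‖ + 1))) * (‖f‖ + 1) :=
              mul_le_mul hmnpr.le (by linarith) (abs_nonneg _) hδ4.le
            linarith
        _ < δ := by
            rw [div_mul_eq_mul_div, mul_comm]
            rw [mul_div_assoc]
            have : (‖f‖ + 1) / (4 * (‖f‖ + 1)) = 1/4 := by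
              field_simp
            rw [this]
            linarith
    -- assembly
    rw [Metric.tendsto_atTop]
    intro ε hε
    set M := ‖f‖ + 1 with hM
    have hM0 : 0 < M := by positivity
    set η := ε / (4 * M) with hη
    have hη0 : 0 < η := by positivity
    have hMη : M * η = ε / 4 := by
      rw [hη]
      field_simp
    obtain ⟨F, hF⟩ : ∃ F : Finset FinP, 1 - η < ∑ p ∈ F, pr p :=
      (hhs.eventually (eventually_gt_nhds (by linarith : 1 - η < 1))).exists
    have hdisjA : ∀ n : ℕ, (↑F : Set FinP).Pairwise
        (Function.onFun Disjoint fun p : FinP =>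
          {l : IntPartition | l.1 = ((n:ℕ∞) - p.1.1.sum) :: p.1.1}) := by
      intro n p _ r _ hpr'
      rw [Function.onFun, Set.disjoint_left]
      intro l hl hl'
      apply hpr'
      have hlp : l.1 = ((n:ℕ∞) - p.1.1.sum) :: p.1.1 := hl
      have hlr : l.1 = ((n:ℕ∞) - r.1.1.sum) :: r.1.1 := hl'
      have h1 : ((n:ℕ∞) - p.1.1.sum) :: p.1.1 = ((n:ℕ∞) - r.1.1.sum) :: r.1.1 :=
        hlp.symm.trans hlr
      exact Subtype.ext (ext' (List.cons_eq_cons.1 h1).2)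
    have hBn : ∀ n, |∫ x, f x ∂(q n) - ∑ p ∈ F,
          ∫ x in {l : IntPartition | l.1 = ((n:ℕ∞) - p.1.1.sum) :: p.1.1}, f x ∂(q n)|
        ≤ ‖f‖ * (1 - ∑ p ∈ F,
          (q n {l : IntPartition | l.1 = ((n:ℕ∞) - p.1.1.sum) :: p.1.1}).toReal) :=
      fun n => integral_bound (q n) f F _ (hdisjA n)
    have hBinf : |∫ x, f x ∂qinf - ∑ p ∈ F, ∫ x in ({phi p} : Set IntPartition), f x ∂qinf|
        ≤ ‖f‖ * (1 - ∑ p ∈ F, pr p) :=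
      integral_bound qinf f F (fun p => {phi p}) (pairwise_phi.set_pairwise _)
    have hinf_sum : ∑ p ∈ F, ∫ x in ({phi p} : Set IntPartition), f x ∂qinf
        = ∑ p ∈ F, pr p * f (phi p) :=
      Finset.sum_congr rfl fun p _ => by rw [integral_singleton, smul_eq_mul, measureReal_def]
    rw [hinf_sum] at hBinf
    have hS : Tendsto (fun n => ∑ p ∈ F,
        ∫ x in {l : IntPartition | l.1 = ((n:ℕ∞) - p.1.1.sum) :: p.1.1}, f x ∂(q n))
        atTop (𝓝 (∑ p ∈ F, pr p * f (phi p))) :=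
      tendsto_finset_sum F fun p _ => hA p
    have hq : Tendsto (fun n => ∑ p ∈ F,
        (q n {l : IntPartition | l.1 = ((n:ℕ∞) - p.1.1.sum) :: p.1.1}).toReal)
        atTop (𝓝 (∑ p ∈ F, pr p)) :=
      tendsto_finset_sum F fun p _ => hm p
    obtain ⟨N1, hN1⟩ := (Metric.tendsto_atTop.1 hS) (M * η) (by positivity)
    obtain ⟨N2, hN2⟩ := eventually_atTop.1 (hq.eventually (eventually_gt_nhds hF))
    refine ⟨max N1 N2, fun n hn => ?_⟩
    have hn1 : N1 ≤ n := le_trans (le_max_left _ _) hn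
    have hn2 : N2 ≤ n := le_trans (le_max_right _ _) hn
    have ht2 : |∑ p ∈ F, ∫ x in {l : IntPartition | l.1 = ((n:ℕ∞) - p.1.1.sum) :: p.1.1},
        f x ∂(q n) - ∑ p ∈ F, pr p * f (phi p)| < M * η := by
      have h := hN1 n hn1
      rwa [Real.dist_eq] at h
    have hsum_n : 1 - η < ∑ p ∈ F,
        (q n {l : IntPartition | l.1 = ((n:ℕ∞) - p.1.1.sum) :: p.1.1}).toReal := hN2 n hn2
    have hsum_n_le : ∑ p ∈ F,
        (q n {l : IntPartition | l.1 = ((n:ℕ∞) - p.1.1.sum) :: p.1.1}).toReal ≤ 1 :=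
      sum_meas_le (q n) F _ (hdisjA n)
    have hsum_inf_le : ∑ p ∈ F, pr p ≤ 1 :=
      sum_meas_le qinf F (fun p => {phi p}) (pairwise_phi.set_pairwise _)
    have hfM : ‖f‖ ≤ M := by rw [hM]; linarith
    have hfnorm : 0 ≤ ‖f‖ := norm_nonneg f
    have ht1 : |∫ x, f x ∂(q n) - ∑ p ∈ F,
          ∫ x in {l : IntPartition | l.1 = ((n:ℕ∞) - p.1.1.sum) :: p.1.1}, f x ∂(q n)|
        ≤ M * η := by
      refine le_trans (hBn n) ?_
      have h0 : 0 ≤ 1 - ∑ p ∈ F,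
          (q n {l : IntPartition | l.1 = ((n:ℕ∞) - p.1.1.sum) :: p.1.1}).toReal := by
        linarith
      nlinarith
    have ht3 : |∫ x, f x ∂qinf - ∑ p ∈ F, pr p * f (phi p)| ≤ M * η := by
      refine le_trans hBinf ?_
      have h0 : 0 ≤ 1 - ∑ p ∈ F, pr p := by linarith
      nlinarith
    rw [Real.dist_eq]
    have htri : |∫ x, f x ∂(q n) - ∫ x, f x ∂qinf|
        ≤ |∫ x, f x ∂(q n) - ∑ p ∈ F,
            ∫ x in {l : IntPartition | l.1 = ((n:ℕ∞) - p.1.1.sum) :: p.1.1}, f x ∂(q n)|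
          + |∑ p ∈ F, ∫ x in {l : IntPartition | l.1 = ((n:ℕ∞) - p.1.1.sum) :: p.1.1},
              f x ∂(q n) - ∑ p ∈ F, pr p * f (phi p)|
          + |∑ p ∈ F, pr p * f (phi p) - ∫ x, f x ∂qinf| := by
      have h1 := abs_sub_le (∫ x, f x ∂(q n))
        (∑ p ∈ F, ∫ x in {l : IntPartition | l.1 = ((n:ℕ∞) - p.1.1.sum) :: p.1.1}, f x ∂(q n))
        (∫ x, f x ∂qinf)
      have h2 := abs_sub_le
        (∑ p ∈ F, ∫ x in {l : IntPartition | l.1 = ((n:ℕ∞) - p.1.1.sum) :: p.1.1}, f x ∂(q n))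
        (∑ p ∈ F, pr p * f (phi p)) (∫ x, f x ∂qinf)
      linarith
    have ht3' : |∑ p ∈ F, pr p * f (phi p) - ∫ x, f x ∂qinf| ≤ M * η := by
      rw [abs_sub_comm]; exact ht3
    have hfinal : |∫ x, f x ∂(q n) - ∫ x, f x ∂qinf| < 3 * (M * η) := by linarith
    rw [hMη] at hfinal
    linarith


end IntPartition
end

section
/- Let (X_i)_{i≥1} and (Y_i)_{i≥1} be pointed weighted compact metric spaces such that the concatenations ⟨X_i ; i ≥ 1⟩ and ⟨Y_i ; i ≥ 1⟩ are both compact with finite total measure. Then d_GHP(⟨X_i ; i ≥ 1⟩, ⟨Y_i ; i ≥ 1⟩) ≤ Σ_{i≥1} d_GHP(X_i, Y_i). -/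
/- Statement 6: subadditivity of the GHP distance under concatenation. -/

open MeasureTheory Set Filter Topology
open scoped ENNReal NNReal

section GHP

variable {X Y : Type*}

/-- The total-variation norm `‖μ − ν‖_TV` of the difference of two finite Borel
measures, characterised as `sup_A (μ(A) − ν(A)) + sup_A (ν(A) − μ(A))` over
measurable sets `A`. -/
noncomputable def tvDist [MeasurableSpace X] (μ ν : Measure X) : ℝ :=
  sSup {r | ∃ A : Set X, MeasurableSet A ∧ r = (μ A).toReal - (ν A).toReal} +
  sSup {r | ∃ A : Set X, MeasurableSet A ∧ r = (ν A).toReal - (μ A).toReal}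

/-- A (pointed) correspondence between two pointed spaces: a measurable subset of
`X × Y` containing the pair of roots whose two projections are surjective. -/
def IsCorrespondence [MeasurableSpace X] [MeasurableSpace Y] (ρX : X) (ρY : Y)
    (C : Set (X × Y)) : Prop :=
  MeasurableSet C ∧ (ρX, ρY) ∈ C ∧ (∀ x : X, ∃ y : Y, (x, y) ∈ C) ∧
    (∀ y : Y, ∃ x : X, (x, y) ∈ C)

/-- The distortion of a correspondence. -/
noncomputable def distortion (dX : X → X → ℝ) (dY : Y → Y → ℝ) (C : Set (X × Y)) : ℝ :=
  sSup {r | ∃ p ∈ C, ∃ q ∈ C, r = |dX p.1 q.1 - dY p.2 q.2|}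

/-- The discrepancy `D(π; μX, μY)` of a measure `π` on `X × Y` with respect to `μX`
and `μY`. -/
noncomputable def discrepancy [MeasurableSpace X] [MeasurableSpace Y]
    (π : Measure (X × Y)) (μX : Measure X) (μY : Measure Y) : ℝ :=
  tvDist μX (π.map Prod.fst) + tvDist μY (π.map Prod.snd)

/-- The Gromov–Hausdorff–Prokhorov distance between two pointed weighted spaces,
given by their distance functions, roots and measures:
`d_GHP = inf { (dis C)/2 ∨ D(π;μX,μY) ∨ π(Cᶜ) }` over pointed correspondences `C`
and finite Borel measures `π` on `X × Y`. -/
noncomputable def dGHP [MeasurableSpace X] [MeasurableSpace Y]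
    (dX : X → X → ℝ) (ρX : X) (μX : Measure X)
    (dY : Y → Y → ℝ) (ρY : Y) (μY : Measure Y) : ℝ :=
  sInf {r | ∃ C : Set (X × Y), ∃ π : Measure (X × Y),
    IsCorrespondence ρX ρY C ∧ IsFiniteMeasure π ∧
    r = max (max (distortion dX dY C / 2) (discrepancy π μX μY)) ((π Cᶜ).toReal)}

/-- The closed ball of radius `r` around the root (the root is always included, so
that the restricted space is pointed even in degenerate cases). -/
def rootBall (dX : X → X → ℝ) (ρX : X) (r : ℝ) : Set X :=
  {x | dX ρX x ≤ r ∨ x = ρX}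

/-- The GHP distance between the closed balls of radius `r` around the roots,
each equipped with the restriction of the distance and of the measure. -/
noncomputable def ballGHP [MeasurableSpace X] [MeasurableSpace Y]
    (dX : X → X → ℝ) (ρX : X) (μX : Measure X)
    (dY : Y → Y → ℝ) (ρY : Y) (μY : Measure Y) (r : ℝ) : ℝ :=
  dGHP (fun a b : rootBall dX ρX r => dX a.1 b.1) ⟨ρX, Or.inr rfl⟩
      ((μX.restrict (rootBall dX ρX r)).comap Subtype.val)
    (fun a b : rootBall dY ρY r => dY a.1 b.1) ⟨ρY, Or.inr rfl⟩
      ((μY.restrict (rootBall dY ρY r)).comap Subtype.val)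

/-- The extended Gromov–Hausdorff–Prokhorov distance
`D_GHP(X,Y) = ∫_0^∞ e^{−r} (1 ∧ d_GHP(X|_r, Y|_r)) dr`. -/
noncomputable def DGHP [MeasurableSpace X] [MeasurableSpace Y]
    (dX : X → X → ℝ) (ρX : X) (μX : Measure X)
    (dY : Y → Y → ℝ) (ρY : Y) (μY : Measure Y) : ℝ :=
  ∫ r in Set.Ioi (0 : ℝ), Real.exp (-r) * min 1 (ballGHP dX ρX μX dY ρY μY r)

end GHP

/-- The carrier of the concatenation: a new root together with the disjoint union of
the `X i` (the metric identifies all the roots `ρ i` with the new root). -/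
abbrev Concat (X : ℕ → Type) : Type := Unit ⊕ (Σ i, X i)

/-- The (pseudo)distance of the concatenation `⟨X_i ; i⟩`. -/
noncomputable def concatDist (X : ℕ → Type) [∀ i, MetricSpace (X i)] (ρ : ∀ i, X i) :
    Concat X → Concat X → ℝ
  | Sum.inl _, Sum.inl _ => 0
  | Sum.inl _, Sum.inr ⟨i, x⟩ => dist (ρ i) x
  | Sum.inr ⟨i, x⟩, Sum.inl _ => dist (ρ i) x
  | Sum.inr ⟨i, x⟩, Sum.inr ⟨j, y⟩ =>
      if h : i = j then dist x (cast (congrArg X h.symm) y)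
      else dist (ρ i) x + dist (ρ j) y

/-- The measure of the concatenation: the sum of the measures `μ i` carried by the
pieces `X i`. -/
noncomputable def concatMeasure (X : ℕ → Type) [∀ i, MeasurableSpace (X i)]
    (μ : ∀ i, Measure (X i)) : Measure (Concat X) :=
  Measure.sum fun i => (μ i).map fun x => Sum.inr ⟨i, x⟩

/-- Sequential compactness with respect to a (pseudo)distance. -/
def SeqCompactDist {Z : Type*} (d : Z → Z → ℝ) : Prop :=
  ∀ u : ℕ → Z, ∃ x : Z, ∃ φ : ℕ → ℕ, StrictMono φ ∧
    Tendsto (fun n => d (u (φ n)) x) atTop (𝓝 0)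

section Aux

open MeasureTheory Set

/-- Half of the total variation distance: `sup_A (μ(A) − ν(A))`. -/
noncomputable def halfTV {Z : Type*} [MeasurableSpace Z] (μ ν : Measure Z) : ℝ :=
  sSup {r | ∃ A : Set Z, MeasurableSet A ∧ r = (μ A).toReal - (ν A).toReal}

lemma tvDist_eq_halfTV {Z : Type*} [MeasurableSpace Z] (μ ν : Measure Z) :
    tvDist μ ν = halfTV μ ν + halfTV ν μ := rfl

lemma halfTV_bddAbove {Z : Type*} [MeasurableSpace Z] (μ ν : Measure Z) [IsFiniteMeasure μ] :
    BddAbove {r | ∃ A : Set Z, MeasurableSet A ∧ r = (μ A).toReal - (ν A).toReal} := by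
  refine ⟨(μ univ).toReal, ?_⟩
  rintro r ⟨A, hA, rfl⟩
  have h1 : (μ A).toReal ≤ (μ univ).toReal :=
    ENNReal.toReal_mono (measure_ne_top μ univ) (measure_mono (subset_univ A))
  have h2 : (0:ℝ) ≤ (ν A).toReal := ENNReal.toReal_nonneg
  linarith

lemma le_halfTV {Z : Type*} [MeasurableSpace Z] (μ ν : Measure Z) [IsFiniteMeasure μ]
    {A : Set Z} (hA : MeasurableSet A) : (μ A).toReal - (ν A).toReal ≤ halfTV μ ν :=
  le_csSup (halfTV_bddAbove μ ν) ⟨A, hA, rfl⟩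

lemma halfTV_nonneg {Z : Type*} [MeasurableSpace Z] (μ ν : Measure Z) [IsFiniteMeasure μ] :
    0 ≤ halfTV μ ν := by
  have := le_halfTV μ ν MeasurableSet.empty
  simpa using this

lemma halfTV_sum_le {Z : Type*} [MeasurableSpace Z] (μ ν : ℕ → Measure Z) (p : ℕ → ℝ)
    [∀ i, IsFiniteMeasure (μ i)] [∀ i, IsFiniteMeasure (ν i)]
    (hμt : (Measure.sum μ) univ ≠ ⊤) (hνt : (Measure.sum ν) univ ≠ ⊤)
    (hp : Summable p) (hp0 : ∀ i, 0 ≤ p i)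
    (hple : ∀ (i : ℕ) (A : Set Z), MeasurableSet A → (μ i A).toReal - (ν i A).toReal ≤ p i) :
    halfTV (Measure.sum μ) (Measure.sum ν) ≤ ∑' i, p i := by
  refine Real.sSup_le ?_ (tsum_nonneg hp0)
  rintro r ⟨A, hA, rfl⟩
  have hμA : ∑' i, μ i A ≠ ⊤ := by
    refine ne_top_of_le_ne_top ?_ (ENNReal.tsum_le_tsum fun i => measure_mono (subset_univ A))
    rwa [← Measure.sum_apply _ MeasurableSet.univ]
  have hνA : ∑' i, ν i A ≠ ⊤ := by
    refine ne_top_of_le_ne_top ?_ (ENNReal.tsum_le_tsum fun i => measure_mono (subset_univ A))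
    rwa [← Measure.sum_apply _ MeasurableSet.univ]
  have ha : Summable fun i => (μ i A).toReal := ENNReal.summable_toReal hμA
  have hb : Summable fun i => (ν i A).toReal := ENNReal.summable_toReal hνA
  rw [Measure.sum_apply _ hA, Measure.sum_apply _ hA,
    ENNReal.tsum_toReal_eq (fun i => measure_ne_top _ _),
    ENNReal.tsum_toReal_eq (fun i => measure_ne_top _ _), ← Summable.tsum_sub ha hb]
  exact Summable.tsum_le_tsum (fun i => hple i A hA) (ha.sub hb) hp

lemma measurable_sigmaMk' {ι : Type*} {β : ι → Type*} [∀ i, MeasurableSpace (β i)] (i : ι) :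
    Measurable (@Sigma.mk ι β i) := fun _s hs => MeasurableSpace.measurableSet_iInf.1 hs i

lemma measurableEmbedding_sigmaMk' {ι : Type*} [DecidableEq ι] {β : ι → Type*}
    [∀ i, MeasurableSpace (β i)] (i : ι) :
    MeasurableEmbedding (@Sigma.mk ι β i) := by
  refine ⟨sigma_mk_injective, measurable_sigmaMk' i, fun s hs => ?_⟩
  rw [MeasurableSpace.measurableSet_iInf]
  intro j
  show MeasurableSet (Sigma.mk j ⁻¹' (Sigma.mk i '' s))
  rcases eq_or_ne j i with rfl | hj
  · rw [sigma_mk_injective.preimage_image]; exact hs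
  · have : Sigma.mk j ⁻¹' (Sigma.mk i '' s) = ∅ := by
      ext x; simp only [mem_preimage, mem_image, mem_empty_iff_false, iff_false]
      rintro ⟨y, -, h⟩
      exact hj (congrArg Sigma.fst h).symm
    rw [this]; exact MeasurableSet.empty

lemma measurableEmbedding_inr' {α β : Type*} [MeasurableSpace α] [MeasurableSpace β] :
    MeasurableEmbedding (Sum.inr : β → α ⊕ β) :=
  ⟨Sum.inr_injective, measurable_inr, fun _s hs => hs.inr_image⟩

end Aux

/- Statement 6: the GHP distance between two concatenations is at most the sum of the
GHP distances of the pieces (the inequality being stated in `ℝ≥0∞` to allow an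
infinite right-hand side). -/
theorem dGHP_concat_le_tsum (X Y : ℕ → Type)
    [∀ i, MetricSpace (X i)] [∀ i, CompactSpace (X i)]
    [∀ i, MeasurableSpace (X i)] [∀ i, BorelSpace (X i)]
    [∀ i, MetricSpace (Y i)] [∀ i, CompactSpace (Y i)]
    [∀ i, MeasurableSpace (Y i)] [∀ i, BorelSpace (Y i)]
    (ρX : ∀ i, X i) (μX : ∀ i, Measure (X i)) [∀ i, IsFiniteMeasure (μX i)]
    (ρY : ∀ i, Y i) (μY : ∀ i, Measure (Y i)) [∀ i, IsFiniteMeasure (μY i)]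
    (hXc : SeqCompactDist (concatDist X ρX))
    (hXm : concatMeasure X μX Set.univ ≠ ⊤)
    (hYc : SeqCompactDist (concatDist Y ρY))
    (hYm : concatMeasure Y μY Set.univ ≠ ⊤) :
    ENNReal.ofReal
        (dGHP (concatDist X ρX) (Sum.inl ()) (concatMeasure X μX)
          (concatDist Y ρY) (Sum.inl ()) (concatMeasure Y μY))
      ≤ ∑' i, ENNReal.ofReal
          (dGHP (fun a b : X i => dist a b) (ρX i) (μX i)
            (fun a b : Y i => dist a b) (ρY i) (μY i)) := by
  classical
  set dI : ℕ → ℝ := fun i =>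
    dGHP (fun a b : X i => dist a b) (ρX i) (μX i)
      (fun a b : Y i => dist a b) (ρY i) (μY i) with hdI
  have hne : ∀ i, Set.Nonempty {r | ∃ C : Set (X i × Y i), ∃ π : Measure (X i × Y i),
      IsCorrespondence (ρX i) (ρY i) C ∧ IsFiniteMeasure π ∧
      r = max (max (distortion (fun a b : X i => dist a b) (fun a b : Y i => dist a b) C / 2)
        (discrepancy π (μX i) (μY i))) ((π Cᶜ).toReal)} := by
    intro i
    exact ⟨_, Set.univ, 0,
      ⟨MeasurableSet.univ, mem_univ _, fun x => ⟨ρY i, mem_univ _⟩, fun y => ⟨ρX i, mem_univ _⟩⟩,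
      inferInstance, rfl⟩
  have hd0 : ∀ i, 0 ≤ dI i := by
    intro i
    refine Real.sInf_nonneg ?_
    rintro s ⟨C', π', -, -, rfl⟩
    exact le_trans ENNReal.toReal_nonneg (le_max_right _ _)
  refine ENNReal.le_of_forall_pos_le_add fun ε hε hlt => ?_
  have hsum_dI : Summable dI := by
    have h := ENNReal.summable_toReal hlt.ne
    exact h.congr fun i => ENNReal.toReal_ofReal (hd0 i)
  have hεR : (0:ℝ) < (ε:ℝ) := by exact_mod_cast hε
  set εi : ℕ → ℝ := fun i => (ε:ℝ) / 2 / 2 ^ i with hεidef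
  have hεi_pos : ∀ i, 0 < εi i := by intro i; positivity
  have hεi_sum : Summable εi := summable_geometric_two' _
  have hεi_tsum : ∑' i, εi i = (ε:ℝ) := tsum_geometric_two' _
  have hex : ∀ i, ∃ s, (∃ C : Set (X i × Y i), ∃ π : Measure (X i × Y i),
      IsCorrespondence (ρX i) (ρY i) C ∧ IsFiniteMeasure π ∧
      s = max (max (distortion (fun a b : X i => dist a b) (fun a b : Y i => dist a b) C / 2)
        (discrepancy π (μX i) (μY i))) ((π Cᶜ).toReal)) ∧ s < dI i + εi i := by
    intro i
    obtain ⟨a, ha, hlt'⟩ := Real.lt_sInf_add_pos (hne i) (hεi_pos i)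
    exact ⟨a, ha, hlt'⟩
  choose r hrmem hrlt using hex
  choose C πm hcorr hfin hval using hrmem
  haveI : ∀ i, IsFiniteMeasure (πm i) := hfin
  have hr0 : ∀ i, 0 ≤ r i := fun i =>
    (hval i) ▸ le_trans ENNReal.toReal_nonneg (le_max_right _ _)
  have hrsum : Summable r :=
    Summable.of_nonneg_of_le hr0 (fun i => (hrlt i).le) (hsum_dI.add hεi_sum)
  have htsum_r_le : ∑' i, r i ≤ (∑' i, dI i) + (ε:ℝ) := by
    calc ∑' i, r i ≤ ∑' i, (dI i + εi i) :=
          Summable.tsum_le_tsum (fun i => (hrlt i).le) hrsum (hsum_dI.add hεi_sum)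
      _ = (∑' i, dI i) + ∑' i, εi i := Summable.tsum_add hsum_dI hεi_sum
      _ = (∑' i, dI i) + (ε:ℝ) := by rw [hεi_tsum]
  -- embeddings
  set eX : ∀ i, X i → Concat X := fun i x => Sum.inr ⟨i, x⟩ with heX
  set eY : ∀ i, Y i → Concat Y := fun i y => Sum.inr ⟨i, y⟩ with heY
  have hEX : ∀ i, MeasurableEmbedding (eX i) := fun i =>
    measurableEmbedding_inr'.comp (measurableEmbedding_sigmaMk' i)
  have hEY : ∀ i, MeasurableEmbedding (eY i) := fun i =>
    measurableEmbedding_inr'.comp (measurableEmbedding_sigmaMk' i)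
  set eP : ∀ i, X i × Y i → Concat X × Concat Y := fun i p => (eX i p.1, eY i p.2) with heP
  have hEP : ∀ i, MeasurableEmbedding (eP i) := fun i => (hEX i).prodMap (hEY i)
  set CC : Set (Concat X × Concat Y) :=
    (({Sum.inl ()} : Set (Concat X)) ×ˢ ({Sum.inl ()} : Set (Concat Y))) ∪
      ⋃ i, eP i '' C i with hCCdef
  have hsingX : ({Sum.inl ()} : Set (Concat X)) = range Sum.inl := by
    ext z
    cases z with
    | inl u => cases u; simp
    | inr v => simp
  have hsingY : ({Sum.inl ()} : Set (Concat Y)) = range Sum.inl := by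
    ext z
    cases z with
    | inl u => cases u; simp
    | inr v => simp
  have hCmeas : MeasurableSet CC := by
    refine MeasurableSet.union (MeasurableSet.prod ?_ ?_)
      (MeasurableSet.iUnion fun i => (hEP i).measurableSet_image.2 (hcorr i).1)
    · rw [hsingX]; exact measurableSet_range_inl
    · rw [hsingY]; exact measurableSet_range_inl
  have hrootmem : ∀ i, (ρX i, ρY i) ∈ C i := fun i => (hcorr i).2.1
  have hCC_corr : IsCorrespondence (Sum.inl () : Concat X) (Sum.inl () : Concat Y) CC := by
    refine ⟨hCmeas, Or.inl (by simp), ?_, ?_⟩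
    · rintro (u | ⟨i, x⟩)
      · cases u; exact ⟨Sum.inl (), Or.inl (by simp)⟩
      · obtain ⟨y, hy⟩ := (hcorr i).2.2.1 x
        exact ⟨eY i y, Or.inr (mem_iUnion.2 ⟨i, ⟨(x, y), hy, rfl⟩⟩)⟩
    · rintro (u | ⟨i, y⟩)
      · cases u; exact ⟨Sum.inl (), Or.inl (by simp)⟩
      · obtain ⟨x, hx⟩ := (hcorr i).2.2.2 y
        exact ⟨eX i x, Or.inr (mem_iUnion.2 ⟨i, ⟨(x, y), hx, rfl⟩⟩)⟩
  have hmemCC : ∀ p ∈ CC, p = (Sum.inl (), Sum.inl ()) ∨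
      ∃ i z, z ∈ C i ∧ p = (eX i z.1, eY i z.2) := by
    rintro p (hp | hp)
    · left
      obtain ⟨h1, h2⟩ := hp
      exact Prod.ext h1 h2
    · right
      obtain ⟨i, z, hz, hpz⟩ := by simpa only [mem_iUnion, mem_image] using hp
      exact ⟨i, z, hz, hpz.symm⟩
  -- distortion
  set t : ℕ → ℝ := fun i =>
    distortion (fun a b : X i => dist a b) (fun a b : Y i => dist a b) (C i) with htdef
  have hbddt : ∀ i, BddAbove {s | ∃ p ∈ C i, ∃ q ∈ C i,
      s = |dist p.1 q.1 - dist p.2 q.2|} := by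
    intro i
    refine ⟨Metric.diam (univ : Set (X i)) + Metric.diam (univ : Set (Y i)), ?_⟩
    rintro s ⟨p, hp, q, hq, rfl⟩
    have h1 : dist p.1 q.1 ≤ Metric.diam (univ : Set (X i)) :=
      Metric.dist_le_diam_of_mem isCompact_univ.isBounded (mem_univ _) (mem_univ _)
    have h2 : dist p.2 q.2 ≤ Metric.diam (univ : Set (Y i)) :=
      Metric.dist_le_diam_of_mem isCompact_univ.isBounded (mem_univ _) (mem_univ _)
    have h3 : (0:ℝ) ≤ dist p.1 q.1 := dist_nonneg
    have h4 : (0:ℝ) ≤ dist p.2 q.2 := dist_nonneg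
    rw [abs_sub_le_iff]
    constructor <;> linarith
  have ht_le : ∀ i, ∀ p ∈ C i, ∀ q ∈ C i, |dist p.1 q.1 - dist p.2 q.2| ≤ t i :=
    fun i p hp q hq => le_csSup (hbddt i) ⟨p, hp, q, hq, rfl⟩
  have ht0 : ∀ i, 0 ≤ t i := fun i =>
    le_trans (abs_nonneg _) (ht_le i _ (hrootmem i) _ (hrootmem i))
  have ht2r : ∀ i, t i ≤ 2 * r i := by
    intro i
    have h1 : t i / 2 ≤ r i := (hval i) ▸ le_trans (le_max_left _ _) (le_max_left _ _)
    linarith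
  have htsum : Summable t := Summable.of_nonneg_of_le ht0 ht2r (hrsum.mul_left 2)
  have htsum_le : ∑' i, t i ≤ 2 * ∑' i, r i := by
    rw [← tsum_mul_left]
    exact Summable.tsum_le_tsum ht2r htsum (hrsum.mul_left 2)
  have htt : ∀ i, t i ≤ ∑' j, t j := fun i => Summable.le_tsum htsum i fun j _ => ht0 j
  have htt2 : ∀ i j, i ≠ j → t i + t j ≤ ∑' k, t k := by
    intro i j hij
    have h := Summable.sum_le_tsum ({i, j} : Finset ℕ) (fun k _ => ht0 k) htsum
    rwa [Finset.sum_pair hij] at h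
  have hdis_pt : ∀ p ∈ CC, ∀ q ∈ CC,
      |concatDist X ρX p.1 q.1 - concatDist Y ρY p.2 q.2| ≤ ∑' i, t i := by
    intro p hp q hq
    rcases hmemCC p hp with rfl | ⟨i, z, hz, rfl⟩ <;>
      rcases hmemCC q hq with rfl | ⟨j, w, hw, rfl⟩
    · simpa [concatDist] using tsum_nonneg ht0
    · simpa [concatDist, heX, heY] using le_trans (ht_le j _ (hrootmem j) _ hw) (htt j)
    · simpa [concatDist, heX, heY] using le_trans (ht_le i _ (hrootmem i) _ hz) (htt i)
    · by_cases hij : i = j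
      · subst hij
        simpa [concatDist, heX, heY] using le_trans (ht_le i _ hz _ hw) (htt i)
      · have h1 : |dist (ρX i) z.1 - dist (ρY i) z.2| ≤ t i := ht_le i _ (hrootmem i) _ hz
        have h2 : |dist (ρX j) w.1 - dist (ρY j) w.2| ≤ t j := ht_le j _ (hrootmem j) _ hw
        have h3 := htt2 i j hij
        have h4 : |dist (ρX i) z.1 + dist (ρX j) w.1 - (dist (ρY i) z.2 + dist (ρY j) w.2)|
            ≤ |dist (ρX i) z.1 - dist (ρY i) z.2| + |dist (ρX j) w.1 - dist (ρY j) w.2| := by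
          have h5 := abs_add_le (dist (ρX i) z.1 - dist (ρY i) z.2)
            (dist (ρX j) w.1 - dist (ρY j) w.2)
          calc |dist (ρX i) z.1 + dist (ρX j) w.1 - (dist (ρY i) z.2 + dist (ρY j) w.2)|
              = |(dist (ρX i) z.1 - dist (ρY i) z.2) + (dist (ρX j) w.1 - dist (ρY j) w.2)| := by
                ring_nf
            _ ≤ _ := h5
        have h6 : |dist (ρX i) z.1 + dist (ρX j) w.1 - (dist (ρY i) z.2 + dist (ρY j) w.2)|
            ≤ ∑' k, t k := by linarith
        simpa [concatDist, heX, heY, hij] using h6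
  have hdisCC : distortion (concatDist X ρX) (concatDist Y ρY) CC ≤ ∑' i, t i := by
    refine Real.sSup_le ?_ (tsum_nonneg ht0)
    rintro s ⟨p, hp, q, hq, rfl⟩
    exact hdis_pt p hp q hq
  -- the coupling measure
  set πC : Measure (Concat X × Concat Y) := Measure.sum fun i => (πm i).map (eP i) with hπCdef
  have hdiscr : ∀ i, discrepancy (πm i) (μX i) (μY i) ≤ r i := fun i =>
    (hval i) ▸ le_trans (le_max_right _ _) (le_max_left _ _)
  have hπfst_univ : ∀ i, ((πm i).map Prod.fst) univ = πm i univ := fun i => by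
    rw [Measure.map_apply measurable_fst MeasurableSet.univ, preimage_univ]
  set pX : ℕ → ℝ := fun i => halfTV (μX i) ((πm i).map Prod.fst) with hpXdef
  set qX : ℕ → ℝ := fun i => halfTV ((πm i).map Prod.fst) (μX i) with hqXdef
  set pY : ℕ → ℝ := fun i => halfTV (μY i) ((πm i).map Prod.snd) with hpYdef
  set qY : ℕ → ℝ := fun i => halfTV ((πm i).map Prod.snd) (μY i) with hqYdef
  have hpX0 : ∀ i, 0 ≤ pX i := fun i => halfTV_nonneg _ _
  have hqX0 : ∀ i, 0 ≤ qX i := fun i => halfTV_nonneg _ _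
  have hpY0 : ∀ i, 0 ≤ pY i := fun i => halfTV_nonneg _ _
  have hqY0 : ∀ i, 0 ≤ qY i := fun i => halfTV_nonneg _ _
  have hpqr : ∀ i, pX i + qX i + (pY i + qY i) ≤ r i := fun i => hdiscr i
  have hpXr : ∀ i, pX i ≤ r i := fun i => by
    have := hpqr i; have := hqX0 i; have := hpY0 i; have := hqY0 i; linarith
  have hqXr : ∀ i, qX i ≤ r i := fun i => by
    have := hpqr i; have := hpX0 i; have := hpY0 i; have := hqY0 i; linarith
  have hpYr : ∀ i, pY i ≤ r i := fun i => by
    have := hpqr i; have := hpX0 i; have := hqX0 i; have := hqY0 i; linarith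
  have hqYr : ∀ i, qY i ≤ r i := fun i => by
    have := hpqr i; have := hpX0 i; have := hqX0 i; have := hpY0 i; linarith
  have hpXs : Summable pX := Summable.of_nonneg_of_le hpX0 hpXr hrsum
  have hqXs : Summable qX := Summable.of_nonneg_of_le hqX0 hqXr hrsum
  have hpYs : Summable pY := Summable.of_nonneg_of_le hpY0 hpYr hrsum
  have hqYs : Summable qY := Summable.of_nonneg_of_le hqY0 hqYr hrsum
  -- total masses
  have hπi_univ : ∀ i, πm i univ ≤ μX i univ + ENNReal.ofReal (r i) := by
    intro i
    have h2 : (πm i univ).toReal - (μX i univ).toReal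
        ≤ halfTV ((πm i).map Prod.fst) (μX i) := by
      have h := le_halfTV ((πm i).map Prod.fst) (μX i) MeasurableSet.univ
      rwa [hπfst_univ i] at h
    have h3 : qX i ≤ r i := hqXr i
    have h6 : (πm i univ).toReal ≤ (μX i univ).toReal + r i := by
      have := h2; have := h3
      simp only [hqXdef] at h3
      linarith
    calc πm i univ = ENNReal.ofReal (πm i univ).toReal :=
          (ENNReal.ofReal_toReal (measure_ne_top _ _)).symm
      _ ≤ ENNReal.ofReal ((μX i univ).toReal + r i) := ENNReal.ofReal_le_ofReal h6
      _ = μX i univ + ENNReal.ofReal (r i) := by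
          rw [ENNReal.ofReal_add ENNReal.toReal_nonneg (hr0 i),
            ENNReal.ofReal_toReal (measure_ne_top _ _)]
  have hXuniv : concatMeasure X μX univ = ∑' i, μX i univ := by
    rw [concatMeasure, Measure.sum_apply _ MeasurableSet.univ]
    exact tsum_congr fun i => by
      rw [Measure.map_apply (hEX i).measurable MeasurableSet.univ, preimage_univ]
  have hπm_univ_sum : ∑' i, πm i univ ≤
      concatMeasure X μX univ + ENNReal.ofReal (∑' i, r i) := by
    calc ∑' i, πm i univ ≤ ∑' i, (μX i univ + ENNReal.ofReal (r i)) :=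
          ENNReal.tsum_le_tsum hπi_univ
      _ = (∑' i, μX i univ) + ∑' i, ENNReal.ofReal (r i) := ENNReal.tsum_add
      _ = concatMeasure X μX univ + ENNReal.ofReal (∑' i, r i) := by
          rw [hXuniv, ENNReal.ofReal_tsum_of_nonneg hr0 hrsum]
  have hπm_ne : ∑' i, πm i univ ≠ ⊤ := by
    refine ne_top_of_le_ne_top ?_ hπm_univ_sum
    exact (ENNReal.add_lt_top.2 ⟨hXm.lt_top, ENNReal.ofReal_lt_top⟩).ne
  have hπC_univ : πC univ = ∑' i, πm i univ := by
    rw [hπCdef, Measure.sum_apply _ MeasurableSet.univ]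
    exact tsum_congr fun i => by
      rw [Measure.map_apply (hEP i).measurable MeasurableSet.univ, preimage_univ]
  haveI hπC_fin : IsFiniteMeasure πC := by
    refine ⟨?_⟩
    rw [hπC_univ]
    exact lt_top_iff_ne_top.2 hπm_ne
  -- marginals
  have hfst : πC.map Prod.fst = Measure.sum fun i => ((πm i).map Prod.fst).map (eX i) := by
    rw [hπCdef, Measure.map_sum measurable_fst.aemeasurable]
    congr 1
    funext i
    rw [Measure.map_map measurable_fst (hEP i).measurable,
      Measure.map_map (hEX i).measurable measurable_fst]
    rfl
  have hsnd : πC.map Prod.snd = Measure.sum fun i => ((πm i).map Prod.snd).map (eY i) := by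
    rw [hπCdef, Measure.map_sum measurable_snd.aemeasurable]
    congr 1
    funext i
    rw [Measure.map_map measurable_snd (hEP i).measurable,
      Measure.map_map (hEY i).measurable measurable_snd]
    rfl
  have hYuniv : concatMeasure Y μY univ = ∑' i, μY i univ := by
    rw [concatMeasure, Measure.sum_apply _ MeasurableSet.univ]
    exact tsum_congr fun i => by
      rw [Measure.map_apply (hEY i).measurable MeasurableSet.univ, preimage_univ]
  have hBXne : (Measure.sum fun i => ((πm i).map Prod.fst).map (eX i)) univ ≠ ⊤ := by
    rw [Measure.sum_apply _ MeasurableSet.univ]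
    have heq : ∀ i, (((πm i).map Prod.fst).map (eX i)) univ = πm i univ := fun i => by
      rw [Measure.map_apply (hEX i).measurable MeasurableSet.univ, preimage_univ, hπfst_univ i]
    rw [tsum_congr heq]
    exact hπm_ne
  have hBYne : (Measure.sum fun i => ((πm i).map Prod.snd).map (eY i)) univ ≠ ⊤ := by
    rw [Measure.sum_apply _ MeasurableSet.univ]
    have heq : ∀ i, (((πm i).map Prod.snd).map (eY i)) univ = πm i univ := fun i => by
      rw [Measure.map_apply (hEY i).measurable MeasurableSet.univ, preimage_univ,
        Measure.map_apply measurable_snd MeasurableSet.univ, preimage_univ]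
    rw [tsum_congr heq]
    exact hπm_ne
  have hAXne : (Measure.sum fun i => (μX i).map (eX i)) univ ≠ ⊤ := hXm
  have hAYne : (Measure.sum fun i => (μY i).map (eY i)) univ ≠ ⊤ := hYm
  have htvX : tvDist (concatMeasure X μX) (πC.map Prod.fst) ≤ (∑' i, pX i) + ∑' i, qX i := by
    rw [hfst]
    have h1 : halfTV (Measure.sum fun i => (μX i).map (eX i))
        (Measure.sum fun i => ((πm i).map Prod.fst).map (eX i)) ≤ ∑' i, pX i := by
      refine halfTV_sum_le _ _ _ hAXne hBXne hpXs hpX0 ?_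
      intro i A hA
      rw [Measure.map_apply (hEX i).measurable hA, Measure.map_apply (hEX i).measurable hA]
      exact le_halfTV _ _ ((hEX i).measurable hA)
    have h2 : halfTV (Measure.sum fun i => ((πm i).map Prod.fst).map (eX i))
        (Measure.sum fun i => (μX i).map (eX i)) ≤ ∑' i, qX i := by
      refine halfTV_sum_le _ _ _ hBXne hAXne hqXs hqX0 ?_
      intro i A hA
      rw [Measure.map_apply (hEX i).measurable hA, Measure.map_apply (hEX i).measurable hA]
      exact le_halfTV _ _ ((hEX i).measurable hA)
    exact add_le_add h1 h2
  have htvY : tvDist (concatMeasure Y μY) (πC.map Prod.snd) ≤ (∑' i, pY i) + ∑' i, qY i := by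
    rw [hsnd]
    have h1 : halfTV (Measure.sum fun i => (μY i).map (eY i))
        (Measure.sum fun i => ((πm i).map Prod.snd).map (eY i)) ≤ ∑' i, pY i := by
      refine halfTV_sum_le _ _ _ hAYne hBYne hpYs hpY0 ?_
      intro i A hA
      rw [Measure.map_apply (hEY i).measurable hA, Measure.map_apply (hEY i).measurable hA]
      exact le_halfTV _ _ ((hEY i).measurable hA)
    have h2 : halfTV (Measure.sum fun i => ((πm i).map Prod.snd).map (eY i))
        (Measure.sum fun i => (μY i).map (eY i)) ≤ ∑' i, qY i := by
      refine halfTV_sum_le _ _ _ hBYne hAYne hqYs hqY0 ?_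
      intro i A hA
      rw [Measure.map_apply (hEY i).measurable hA, Measure.map_apply (hEY i).measurable hA]
      exact le_halfTV _ _ ((hEY i).measurable hA)
    exact add_le_add h1 h2
  have hdisc : discrepancy πC (concatMeasure X μX) (concatMeasure Y μY) ≤ ∑' i, r i := by
    have h1 : (∑' i, pX i) + (∑' i, qX i) + ((∑' i, pY i) + ∑' i, qY i)
        = ∑' i, (pX i + qX i + (pY i + qY i)) := by
      rw [Summable.tsum_add (hpXs.add hqXs) (hpYs.add hqYs), Summable.tsum_add hpXs hqXs, Summable.tsum_add hpYs hqYs]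
    have h2 : ∑' i, (pX i + qX i + (pY i + qY i)) ≤ ∑' i, r i :=
      Summable.tsum_le_tsum hpqr ((hpXs.add hqXs).add (hpYs.add hqYs)) hrsum
    have h3 := add_le_add htvX htvY
    calc discrepancy πC (concatMeasure X μX) (concatMeasure Y μY)
        ≤ (∑' i, pX i) + (∑' i, qX i) + ((∑' i, pY i) + ∑' i, qY i) := h3
      _ = ∑' i, (pX i + qX i + (pY i + qY i)) := h1
      _ ≤ ∑' i, r i := h2
  -- the tail
  have hsubCC : ∀ i, C i ⊆ eP i ⁻¹' CC := fun i z hz =>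
    Or.inr (mem_iUnion.2 ⟨i, z, hz, rfl⟩)
  have htail : (πC CCᶜ).toReal ≤ ∑' i, r i := by
    have h1 : πC CCᶜ ≤ ENNReal.ofReal (∑' i, r i) := by
      rw [hπCdef, Measure.sum_apply _ hCmeas.compl]
      have h2 : ∀ i, ((πm i).map (eP i)) CCᶜ ≤ ENNReal.ofReal (r i) := by
        intro i
        rw [Measure.map_apply (hEP i).measurable hCmeas.compl, preimage_compl]
        have h3 : πm i (eP i ⁻¹' CC)ᶜ ≤ πm i (C i)ᶜ :=
          measure_mono (compl_subset_compl.2 (hsubCC i))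
        have h4 : (πm i (C i)ᶜ).toReal ≤ r i := (hval i) ▸ le_max_right _ _
        have h5 : πm i (C i)ᶜ ≤ ENNReal.ofReal (r i) := by
          rw [← ENNReal.ofReal_toReal (measure_ne_top (πm i) (C i)ᶜ)]
          exact ENNReal.ofReal_le_ofReal h4
        exact le_trans h3 h5
      calc ∑' i, ((πm i).map (eP i)) CCᶜ ≤ ∑' i, ENNReal.ofReal (r i) :=
            ENNReal.tsum_le_tsum h2
        _ = ENNReal.ofReal (∑' i, r i) := (ENNReal.ofReal_tsum_of_nonneg hr0 hrsum).symm
    exact ENNReal.toReal_le_of_le_ofReal (tsum_nonneg hr0) h1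
  -- assembling
  have hmain : dGHP (concatDist X ρX) (Sum.inl ()) (concatMeasure X μX)
      (concatDist Y ρY) (Sum.inl ()) (concatMeasure Y μY) ≤ ∑' i, r i := by
    refine le_trans (csInf_le ⟨0, ?_⟩ ⟨CC, πC, hCC_corr, hπC_fin, rfl⟩) ?_
    · rintro s ⟨C', π', -, -, rfl⟩
      exact le_trans ENNReal.toReal_nonneg (le_max_right _ _)
    · refine max_le (max_le ?_ hdisc) htail
      have h := hdisCC
      linarith [htsum_le]
  calc ENNReal.ofReal (dGHP (concatDist X ρX) (Sum.inl ()) (concatMeasure X μX)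
        (concatDist Y ρY) (Sum.inl ()) (concatMeasure Y μY))
      ≤ ENNReal.ofReal ((∑' i, dI i) + (ε:ℝ)) :=
        ENNReal.ofReal_le_ofReal (le_trans hmain htsum_r_le)
    _ = ENNReal.ofReal (∑' i, dI i) + ENNReal.ofReal (ε:ℝ) :=
        ENNReal.ofReal_add (tsum_nonneg hd0) ε.coe_nonneg
    _ = (∑' i, ENNReal.ofReal (dI i)) + (ε : ℝ≥0∞) := by
        rw [ENNReal.ofReal_tsum_of_nonneg hd0 hsum_dI, ENNReal.ofReal_coe_nnreal]
end

section
/- Let X be a nonnegative-integer-valued random variable such that n^{1+γ} P(X = n) → c as n → ∞, for some γ ∈ (0,1) and some constant c > 0. Then for every continuous function f: ℝ₊ → ℝ₊ with f(x) ≤ 1 ∧ x for all x, one has R·E[f(X/R^{1/γ})] → c·∫_0^∞ f(x) x^{−1−γ} dx as R → ∞. -/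
/- Statement 13: if `X` is an ℕ-valued random variable with
`n^{1+γ} P(X = n) → c` for some `γ ∈ (0,1)` and `c > 0`, then for every continuous
`f : ℝ₊ → ℝ₊` with `f(x) ≤ 1 ∧ x`,
`R · E[f(X / R^{1/γ})] → c ∫_0^∞ f(x) x^{−1−γ} dx` as `R → ∞`. -/

open MeasureTheory Filter Topology Set

private lemma aux_ceil_eq {a x : ℝ} (ha : 0 < a) {i : ℕ}
    (hx : x ∈ Set.Ioc ((i : ℝ) / a) (((i : ℝ) + 1) / a)) : ⌈a * x⌉₊ = i + 1 := by
  rw [Nat.ceil_eq_iff (Nat.succ_ne_zero i)]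
  have h1 := hx.1
  have h2 := hx.2
  rw [div_lt_iff₀ ha] at h1
  rw [le_div_iff₀ ha] at h2
  constructor
  · simp only [Nat.succ_sub_one]
    push_cast
    nlinarith
  · push_cast
    nlinarith

private lemma aux_partition {a : ℝ} (ha : 0 < a) :
    (⋃ i : ℕ, Set.Ioc ((i : ℝ) / a) (((i : ℝ) + 1) / a)) = Set.Ioi 0 := by
  ext x
  simp only [Set.mem_iUnion, Set.mem_Ioc, Set.mem_Ioi]
  constructor
  · rintro ⟨i, h1, h2⟩
    have : (0 : ℝ) ≤ (i : ℝ) / a := div_nonneg (Nat.cast_nonneg i) ha.le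
    linarith
  · intro hx
    have hax : 0 < a * x := mul_pos ha hx
    have h1 : 1 ≤ ⌈a * x⌉₊ := Nat.one_le_ceil_iff.mpr hax
    refine ⟨⌈a * x⌉₊ - 1, ?_, ?_⟩
    · have hcast : ((⌈a * x⌉₊ - 1 : ℕ) : ℝ) = (⌈a * x⌉₊ : ℝ) - 1 := by
        push_cast [h1]; ring
      rw [hcast, div_lt_iff₀ ha]
      have := Nat.ceil_lt_add_one (le_of_lt hax)
      nlinarith
    · have hcast : ((⌈a * x⌉₊ - 1 : ℕ) : ℝ) + 1 = (⌈a * x⌉₊ : ℝ) := by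
        push_cast [h1]; ring
      rw [hcast, le_div_iff₀ ha]
      have := Nat.le_ceil (a * x)
      nlinarith

private lemma aux_sum_eq_integral {a : ℝ} (ha : 0 < a) (h : ℕ → ℝ)
    (hint : MeasureTheory.IntegrableOn (fun x => h ⌈a * x⌉₊) (Set.Ioi 0)) :
    ∫ x in Set.Ioi (0 : ℝ), h ⌈a * x⌉₊ = ∑' i : ℕ, h (i + 1) / a := by
  have hm : ∀ i : ℕ, MeasurableSet (Set.Ioc ((i : ℝ) / a) (((i : ℝ) + 1) / a)) :=
    fun i => measurableSet_Ioc
  have hd : Pairwise (Function.onFun Disjoint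
      fun i : ℕ => Set.Ioc ((i : ℝ) / a) (((i : ℝ) + 1) / a)) := by
    intro i j hij
    have key : ∀ i j : ℕ, i < j → Disjoint (Set.Ioc ((i : ℝ) / a) (((i : ℝ) + 1) / a))
        (Set.Ioc ((j : ℝ) / a) (((j : ℝ) + 1) / a)) := by
      intro i j hlt
      rw [Set.Ioc_disjoint_Ioc]
      refine le_trans (min_le_left _ _) (le_trans ?_ (le_max_right _ _))
      have hij' : ((i : ℝ) + 1) ≤ (j : ℝ) := by exact_mod_cast hlt
      gcongr
    rcases Ne.lt_or_gt hij with hlt | hlt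
    · exact key i j hlt
    · exact (key j i hlt).symm
  have hU : MeasureTheory.IntegrableOn (fun x => h ⌈a * x⌉₊)
      (⋃ i : ℕ, Set.Ioc ((i : ℝ) / a) (((i : ℝ) + 1) / a)) := by
    rwa [aux_partition ha]
  rw [← aux_partition ha, MeasureTheory.integral_iUnion hm hd hU]
  refine tsum_congr fun i => ?_
  rw [MeasureTheory.setIntegral_congr_fun (hm i)
    (fun x hx => (by show h ⌈a * x⌉₊ = h (i + 1); rw [aux_ceil_eq ha hx]) : Set.EqOn
      (fun x => h ⌈a * x⌉₊) (fun _ => h (i + 1)) _),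
    MeasureTheory.setIntegral_const, smul_eq_mul, measureReal_def, Real.volume_Ioc]
  have hlen : ((i : ℝ) + 1) / a - (i : ℝ) / a = 1 / a := by field_simp; ring
  rw [hlen, ENNReal.toReal_ofReal (by positivity), one_div_mul_eq_div]

private lemma aux_bound_integrable {γ : ℝ} (hγ0 : 0 < γ) (hγ1 : γ < 1) :
    MeasureTheory.IntegrableOn (fun x : ℝ => min (x ^ (-γ)) (x ^ (-1 - γ))) (Set.Ioi 0) := by
  have hmeas : Measurable (fun x : ℝ => min (x ^ (-γ)) (x ^ (-1 - γ))) :=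
    (measurable_id.pow_const (-γ)).min (measurable_id.pow_const (-1 - γ))
  have h1 : MeasureTheory.IntegrableOn (fun x : ℝ => x ^ (-γ)) (Set.Ioo (0 : ℝ) 1) :=
    (intervalIntegral.integrableOn_Ioo_rpow_iff zero_lt_one).mpr (by linarith)
  have h1' : MeasureTheory.IntegrableOn (fun x : ℝ => x ^ (-γ)) (Set.Ioc (0 : ℝ) 1) := by
    unfold MeasureTheory.IntegrableOn at h1 ⊢
    rwa [← MeasureTheory.Measure.restrict_congr_set MeasureTheory.Ioo_ae_eq_Ioc]
  have h2 : MeasureTheory.IntegrableOn (fun x : ℝ => x ^ (-1 - γ)) (Set.Ioi (1 : ℝ)) :=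
    integrableOn_Ioi_rpow_of_lt (by linarith) zero_lt_one
  have hA : MeasureTheory.IntegrableOn (fun x : ℝ => min (x ^ (-γ)) (x ^ (-1 - γ)))
      (Set.Ioc (0 : ℝ) 1) := by
    apply MeasureTheory.Integrable.mono' h1' hmeas.aestronglyMeasurable
    rw [MeasureTheory.ae_restrict_iff' measurableSet_Ioc]
    refine Filter.Eventually.of_forall fun x hx => ?_
    have hx0 : (0 : ℝ) < x := hx.1
    rw [Real.norm_eq_abs, abs_of_nonneg (le_min (Real.rpow_nonneg hx0.le _)
      (Real.rpow_nonneg hx0.le _))]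
    exact min_le_left _ _
  have hB : MeasureTheory.IntegrableOn (fun x : ℝ => min (x ^ (-γ)) (x ^ (-1 - γ)))
      (Set.Ioi (1 : ℝ)) := by
    apply MeasureTheory.Integrable.mono' h2 hmeas.aestronglyMeasurable
    rw [MeasureTheory.ae_restrict_iff' measurableSet_Ioi]
    refine Filter.Eventually.of_forall fun x hx => ?_
    have hx0 : (0 : ℝ) < x := lt_trans zero_lt_one hx
    rw [Real.norm_eq_abs, abs_of_nonneg (le_min (Real.rpow_nonneg hx0.le _)
      (Real.rpow_nonneg hx0.le _))]
    exact min_le_right _ _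
  have := hA.union hB
  rwa [Set.Ioc_union_Ioi_eq_Ioi zero_le_one] at this

theorem scaling_limit_of_regular_tail {Ω : Type} [MeasurableSpace Ω]
    (μ : Measure Ω) [IsProbabilityMeasure μ] (X : Ω → ℕ) (hX : Measurable X)
    (γ c : ℝ) (hγ0 : 0 < γ) (hγ1 : γ < 1) (hc : 0 < c)
    (htail : Tendsto (fun n : ℕ => (n : ℝ) ^ (1 + γ) * (μ {ω | X ω = n}).toReal)
      atTop (𝓝 c))
    (f : ℝ → ℝ) (hf : ContinuousOn f (Set.Ici 0))
    (hf0 : ∀ x : ℝ, 0 ≤ x → 0 ≤ f x)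
    (hfb : ∀ x : ℝ, 0 ≤ x → f x ≤ min 1 x) :
    Tendsto (fun R : ℝ => R * ∫ ω, f ((X ω : ℝ) / R ^ (1 / γ)) ∂μ) atTop
      (𝓝 (c * ∫ x in Set.Ioi (0 : ℝ), f x * x ^ (-1 - γ))) := by
  -- notation
  set p : ℕ → ℝ := fun n => (μ {ω | X ω = n}).toReal with hpdef
  set q : ℕ → ℝ := fun n => (n : ℝ) ^ (1 + γ) * p n with hqdef
  set g : ℝ → ℝ := fun x => f x * x ^ (-1 - γ) with hgdef
  have hp0 : ∀ n, 0 ≤ p n := fun n => ENNReal.toReal_nonneg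
  have hq0 : ∀ n, 0 ≤ q n := fun n =>
    mul_nonneg (Real.rpow_nonneg (Nat.cast_nonneg n) _) (hp0 n)
  obtain ⟨M, hM⟩ : ∃ M : ℝ, ∀ n, q n ≤ M := by
    obtain ⟨M, hM⟩ := htail.bddAbove_range
    exact ⟨M, fun n => hM ⟨n, rfl⟩⟩
  have hM0 : 0 ≤ M := le_trans (hq0 0) (hM 0)
  have hf00 : f 0 = 0 := le_antisymm (by simpa using hfb 0 le_rfl) (hf0 0 le_rfl)
  -- the bound on g
  have hgb : ∀ t : ℝ, 0 < t → g t ≤ min (t ^ (-γ)) (t ^ (-1 - γ)) := by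
    intro t ht
    have hr : (0 : ℝ) ≤ t ^ (-1 - γ) := Real.rpow_nonneg ht.le _
    refine le_min ?_ ?_
    · have h1 : f t * t ^ (-1 - γ) ≤ t * t ^ (-1 - γ) :=
        mul_le_mul_of_nonneg_right (le_trans (hfb t ht.le) (min_le_right _ _)) hr
      calc g t ≤ t * t ^ (-1 - γ) := h1
        _ = t ^ (1 : ℝ) * t ^ (-1 - γ) := by rw [Real.rpow_one]
        _ = t ^ (-γ) := by rw [← Real.rpow_add ht]; ring_nf
    · have h1 : f t * t ^ (-1 - γ) ≤ 1 * t ^ (-1 - γ) :=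
        mul_le_mul_of_nonneg_right (le_trans (hfb t ht.le) (min_le_left _ _)) hr
      simpa using h1
  have hg0 : ∀ t : ℝ, 0 ≤ t → 0 ≤ g t := fun t ht =>
    mul_nonneg (hf0 t ht) (Real.rpow_nonneg ht _)
  -- the dominating bound
  have hBint : MeasureTheory.Integrable (fun x : ℝ => M * min (x ^ (-γ)) (x ^ (-1 - γ)))
      ((volume : Measure ℝ).restrict (Set.Ioi 0)) :=
    (aux_bound_integrable hγ0 hγ1).const_mul M
  -- measurability of the step functions
  have hFmeas : ∀ a : ℝ, Measurable (fun x : ℝ => q ⌈a * x⌉₊ * g ((⌈a * x⌉₊ : ℝ) / a)) :=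
    fun a => (measurable_of_countable (fun n : ℕ => q n * g ((n : ℝ) / a))).comp
      (Nat.measurable_ceil.comp (measurable_const_mul a))
  -- pointwise bound
  have hFbound : ∀ a : ℝ, 0 < a → ∀ x ∈ Set.Ioi (0 : ℝ),
      ‖q ⌈a * x⌉₊ * g ((⌈a * x⌉₊ : ℝ) / a)‖ ≤ M * min (x ^ (-γ)) (x ^ (-1 - γ)) := by
    intro a ha x hx
    have hx0 : (0 : ℝ) < x := hx
    have hax : 0 < a * x := mul_pos ha hx0
    set n := ⌈a * x⌉₊ with hndef
    have hn1 : 1 ≤ n := Nat.one_le_ceil_iff.mpr hax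
    have hxt : x ≤ (n : ℝ) / a := by
      rw [le_div_iff₀ ha]
      have := Nat.le_ceil (a * x)
      nlinarith
    have ht0 : (0 : ℝ) < (n : ℝ) / a := lt_of_lt_of_le hx0 hxt
    have hgt : g ((n : ℝ) / a) ≤ min (x ^ (-γ)) (x ^ (-1 - γ)) := by
      refine le_trans (hgb _ ht0) (le_min ?_ ?_)
      · exact le_trans (min_le_left _ _)
          (Real.rpow_le_rpow_of_nonpos hx0 hxt (by linarith))
      · exact le_trans (min_le_right _ _)
          (Real.rpow_le_rpow_of_nonpos hx0 hxt (by linarith))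
    rw [Real.norm_eq_abs, abs_of_nonneg (mul_nonneg (hq0 n) (hg0 _ ht0.le))]
    calc q n * g ((n : ℝ) / a) ≤ M * g ((n : ℝ) / a) :=
          mul_le_mul_of_nonneg_right (hM n) (hg0 _ ht0.le)
      _ ≤ M * min (x ^ (-γ)) (x ^ (-1 - γ)) := mul_le_mul_of_nonneg_left hgt hM0
  -- integrability of the step functions
  have hFint : ∀ a : ℝ, 0 < a →
      MeasureTheory.IntegrableOn (fun x : ℝ => q ⌈a * x⌉₊ * g ((⌈a * x⌉₊ : ℝ) / a))
        (Set.Ioi 0) := by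
    intro a ha
    apply MeasureTheory.Integrable.mono' hBint ((hFmeas a).aestronglyMeasurable)
    rw [MeasureTheory.ae_restrict_iff' measurableSet_Ioi]
    exact Filter.Eventually.of_forall (hFbound a ha)
  -- the key identity
  have key : ∀ R : ℝ, 1 < R →
      R * ∫ ω, f ((X ω : ℝ) / R ^ (1 / γ)) ∂μ =
        ∫ x in Set.Ioi (0 : ℝ), q ⌈R ^ (1 / γ) * x⌉₊ *
          g ((⌈R ^ (1 / γ) * x⌉₊ : ℝ) / R ^ (1 / γ)) := by
    intro R hR
    have hR0 : (0 : ℝ) < R := lt_trans zero_lt_one hR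
    set a : ℝ := R ^ (1 / γ) with hadef
    have ha : 0 < a := Real.rpow_pos_of_pos hR0 _
    have haR : a ^ γ = R := by
      rw [hadef, ← Real.rpow_mul hR0.le, one_div, inv_mul_cancel₀ hγ0.ne', Real.rpow_one]
    -- expectation as a sum
    have hmap : IsProbabilityMeasure (Measure.map X μ) :=
      Measure.isProbabilityMeasure_map hX.aemeasurable
    have hint1 : MeasureTheory.Integrable (fun n : ℕ => f ((n : ℝ) / a)) (Measure.map X μ) := by
      apply MeasureTheory.Integrable.mono' (MeasureTheory.integrable_const 1)
        ((measurable_of_countable _).aestronglyMeasurable)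
      refine Filter.Eventually.of_forall fun n => ?_
      have hn0 : (0 : ℝ) ≤ (n : ℝ) / a := div_nonneg (Nat.cast_nonneg n) ha.le
      rw [Real.norm_eq_abs, abs_of_nonneg (hf0 _ hn0)]
      exact le_trans (hfb _ hn0) (min_le_left _ _)
    have e1 : ∫ ω, f ((X ω : ℝ) / a) ∂μ = ∑' n : ℕ, p n * f ((n : ℝ) / a) := by
      have e0 : (∫ n : ℕ, f ((n : ℝ) / a) ∂(Measure.map X μ)) =
          ∫ ω, f ((X ω : ℝ) / a) ∂μ :=
        MeasureTheory.integral_map hX.aemeasurable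
          ((measurable_of_countable _).aestronglyMeasurable)
      rw [← e0, MeasureTheory.integral_countable' hint1]
      refine tsum_congr fun n => ?_
      rw [smul_eq_mul, measureReal_def, Measure.map_apply hX (measurableSet_singleton n)]
      rfl
    -- summability
    have hsp : Summable p := by
      apply ENNReal.summable_toReal
      refine ne_top_of_le_ne_top (by simp : μ Set.univ ≠ ⊤) ?_
      exact MeasureTheory.tsum_measure_le_measure_univ
        (fun n => (hX (measurableSet_singleton n)).nullMeasurableSet)
        fun i j hij => (Set.disjoint_left.mpr
          fun ω (h1 : X ω = i) (h2 : X ω = j) => hij (h1.symm.trans h2)).aedisjoint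
    have hsum : Summable (fun n : ℕ => p n * f ((n : ℝ) / a)) := by
      refine Summable.of_nonneg_of_le (fun n => ?_) (fun n => ?_) hsp
      · exact mul_nonneg (hp0 n) (hf0 _ (div_nonneg (Nat.cast_nonneg n) ha.le))
      · have hn0 : (0 : ℝ) ≤ (n : ℝ) / a := div_nonneg (Nat.cast_nonneg n) ha.le
        calc p n * f ((n : ℝ) / a) ≤ p n * 1 :=
              mul_le_mul_of_nonneg_left (le_trans (hfb _ hn0) (min_le_left _ _)) (hp0 n)
          _ = p n := mul_one _
    -- the term-by-term identity
    have hterm : ∀ i : ℕ, R * (p (i + 1) * f (((i + 1 : ℕ) : ℝ) / a)) =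
        q (i + 1) * g (((i + 1 : ℕ) : ℝ) / a) / a := by
      intro i
      have hn : (0 : ℝ) < ((i + 1 : ℕ) : ℝ) := by positivity
      have e2 : ((i + 1 : ℕ) : ℝ) ^ (1 + γ) * ((i + 1 : ℕ) : ℝ) ^ (-1 - γ) = 1 := by
        rw [← Real.rpow_add hn]
        norm_num
      have e3 : a ^ (-1 - γ) * a = a ^ (-γ) := by
        nth_rewrite 2 [← Real.rpow_one a]
        rw [← Real.rpow_add ha]
        congr 1
        ring
      have hfactor : ((i + 1 : ℕ) : ℝ) ^ (1 + γ) * ((((i + 1 : ℕ) : ℝ)) / a) ^ (-1 - γ) / a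
          = R := by
        calc ((i + 1 : ℕ) : ℝ) ^ (1 + γ) * ((((i + 1 : ℕ) : ℝ)) / a) ^ (-1 - γ) / a
            = ((i + 1 : ℕ) : ℝ) ^ (1 + γ) *
              (((i + 1 : ℕ) : ℝ) ^ (-1 - γ) / a ^ (-1 - γ)) / a := by
              rw [Real.div_rpow hn.le ha.le]
          _ = (((i + 1 : ℕ) : ℝ) ^ (1 + γ) * ((i + 1 : ℕ) : ℝ) ^ (-1 - γ)) /
              (a ^ (-1 - γ) * a) := by ring
          _ = 1 / a ^ (-γ) := by rw [e2, e3]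
          _ = a ^ γ := by rw [Real.rpow_neg ha.le, one_div, inv_inv]
          _ = R := haR
      simp only [hqdef, hgdef]
      rw [← hfactor]
      ring
    -- assemble
    rw [e1, ← tsum_mul_left]
    have hsum2 : Summable (fun n : ℕ => R * (p n * f ((n : ℝ) / a))) := hsum.mul_left R
    rw [Summable.tsum_eq_zero_add hsum2]
    have hzero : R * (p 0 * f (((0 : ℕ) : ℝ) / a)) = 0 := by
      simp [hf00]
    rw [hzero, zero_add]
    rw [aux_sum_eq_integral ha (fun n => q n * g ((n : ℝ) / a)) (hFint a ha)]
    exact tsum_congr fun i => hterm i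
  -- dominated convergence
  have main : Tendsto (fun R : ℝ => ∫ x in Set.Ioi (0 : ℝ),
      q ⌈R ^ (1 / γ) * x⌉₊ * g ((⌈R ^ (1 / γ) * x⌉₊ : ℝ) / R ^ (1 / γ))) atTop
      (𝓝 (∫ x in Set.Ioi (0 : ℝ), c * g x)) := by
    apply MeasureTheory.tendsto_integral_filter_of_dominated_convergence
      (fun x => M * min (x ^ (-γ)) (x ^ (-1 - γ)))
    · exact Filter.Eventually.of_forall fun R => (hFmeas _).aestronglyMeasurable
    · filter_upwards [eventually_gt_atTop (0 : ℝ)] with R hR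
      rw [MeasureTheory.ae_restrict_iff' measurableSet_Ioi]
      exact Filter.Eventually.of_forall (hFbound _ (Real.rpow_pos_of_pos hR _))
    · exact hBint
    · rw [MeasureTheory.ae_restrict_iff' measurableSet_Ioi]
      refine Filter.Eventually.of_forall fun x hx => ?_
      have hx0 : (0 : ℝ) < x := hx
      have hA : Tendsto (fun R : ℝ => R ^ (1 / γ)) atTop atTop :=
        tendsto_rpow_atTop (by positivity)
      have hax : Tendsto (fun R : ℝ => R ^ (1 / γ) * x) atTop atTop :=
        hA.atTop_mul_const hx0
      have hn : Tendsto (fun R : ℝ => ⌈R ^ (1 / γ) * x⌉₊) atTop atTop :=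
        tendsto_nat_ceil_atTop.comp hax
      have hq : Tendsto (fun R : ℝ => q ⌈R ^ (1 / γ) * x⌉₊) atTop (𝓝 c) := htail.comp hn
      -- the ratio tends to x
      have ht : Tendsto (fun R : ℝ => (⌈R ^ (1 / γ) * x⌉₊ : ℝ) / R ^ (1 / γ)) atTop (𝓝 x) := by
        have hup : Tendsto (fun R : ℝ => x + (R ^ (1 / γ))⁻¹) atTop (𝓝 (x + 0)) :=
          tendsto_const_nhds.add hA.inv_tendsto_atTop
        rw [add_zero] at hup
        refine tendsto_of_tendsto_of_tendsto_of_le_of_le' tendsto_const_nhds hup ?_ ?_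
        · filter_upwards [eventually_gt_atTop (0 : ℝ)] with R hR
          have ha : (0 : ℝ) < R ^ (1 / γ) := Real.rpow_pos_of_pos hR _
          rw [le_div_iff₀ ha]
          have := Nat.le_ceil (R ^ (1 / γ) * x)
          nlinarith
        · filter_upwards [eventually_gt_atTop (0 : ℝ)] with R hR
          have ha : (0 : ℝ) < R ^ (1 / γ) := Real.rpow_pos_of_pos hR _
          have hax0 : 0 < R ^ (1 / γ) * x := mul_pos ha hx0
          rw [div_le_iff₀ ha]
          have h1 := Nat.ceil_lt_add_one (le_of_lt hax0)
          have h2 : (x + (R ^ (1 / γ))⁻¹) * R ^ (1 / γ) = R ^ (1 / γ) * x + 1 := by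
            field_simp
          nlinarith
      -- g is continuous along the ratio
      have hgt : Tendsto (fun R : ℝ => g ((⌈R ^ (1 / γ) * x⌉₊ : ℝ) / R ^ (1 / γ))) atTop
          (𝓝 (g x)) := by
        have htW : Tendsto (fun R : ℝ => (⌈R ^ (1 / γ) * x⌉₊ : ℝ) / R ^ (1 / γ)) atTop
            (𝓝[Set.Ici (0 : ℝ)] x) := by
          rw [tendsto_nhdsWithin_iff]
          refine ⟨ht, ?_⟩
          filter_upwards [eventually_gt_atTop (0 : ℝ)] with R hR
          exact div_nonneg (Nat.cast_nonneg _) (Real.rpow_pos_of_pos hR _).le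
        have hfc : Tendsto (fun R : ℝ => f ((⌈R ^ (1 / γ) * x⌉₊ : ℝ) / R ^ (1 / γ))) atTop
            (𝓝 (f x)) := (hf x (le_of_lt hx0)).tendsto.comp htW
        have hrc : Tendsto (fun R : ℝ => ((⌈R ^ (1 / γ) * x⌉₊ : ℝ) / R ^ (1 / γ)) ^ (-1 - γ))
            atTop (𝓝 (x ^ (-1 - γ))) :=
          ((Real.continuousAt_rpow_const x (-1 - γ) (Or.inl (ne_of_gt hx0))).tendsto).comp ht
        exact hfc.mul hrc
      exact hq.mul hgt
  rw [MeasureTheory.integral_const_mul] at main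
  refine main.congr' ?_
  filter_upwards [eventually_gt_atTop (1 : ℝ)] with R hR
  exact (key R hR).symm
end

section
/- Fix β ∈ (−2, −1) and for n ≥ 2 set Z_n = Σ_{k=1}^{n−1} [Γ(n−k+1+β)/(n−k)!] · [Γ(k+1+β)/k!]. Then n^{−β} Z_n → 2·Γ(2+β)/(−1−β) as n → ∞. -/
/- Statement 19: for `β ∈ (−2, −1)` and
`Z_n = Σ_{k=1}^{n−1} [Γ(n−k+1+β)/(n−k)!]·[Γ(k+1+β)/k!]`, one has
`n^{−β} Z_n → 2 Γ(2+β)/(−1−β)` as `n → ∞`. -/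

open Filter Topology Finset


namespace BetaSplitAux

/-- Bernoulli's inequality for nonpositive exponents. -/
lemma bern {p s : ℝ} (hp : p ≤ 0) (hs : 0 ≤ s) : 1 + p * s ≤ (1 + s) ^ p := by
  rcases le_or_gt (1 + p * s) 0 with h | h
  · exact h.trans (Real.rpow_pos_of_pos (by linarith) p).le
  · have h1 : (0:ℝ) < 1 + s := by linarith
    rw [Real.rpow_def_of_pos h1, mul_comm (Real.log (1 + s)) p]
    have hlog : Real.log (1 + s) ≤ s := by
      have := Real.log_le_sub_one_of_pos h1; linarith
    have h2 : p * s ≤ p * Real.log (1 + s) := mul_le_mul_of_nonpos_left hlog hp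
    calc 1 + p * s ≤ Real.exp (p * s) := by linarith [Real.add_one_le_exp (p * s)]
    _ ≤ Real.exp (p * Real.log (1 + s)) := Real.exp_le_exp.mpr h2

noncomputable def a (β : ℝ) (k : ℕ) : ℝ := Real.Gamma ((k : ℝ) + 1 + β) / (Nat.factorial k : ℝ)

noncomputable def F (β : ℝ) (n : ℕ) : ℝ := ∑ k ∈ Finset.range (n+1), a β k * a β (n - k)

variable {β : ℝ}

lemma arg_ne (hβ1 : -2 < β) (hβ2 : β < -1) (k : ℕ) : (k : ℝ) + 1 + β ≠ 0 := by
  rcases Nat.eq_zero_or_pos k with rfl | hk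
  · push_cast; intro h; linarith
  · have : (1:ℝ) ≤ (k:ℝ) := by exact_mod_cast hk
    intro h; linarith

lemma a_rec (hβ1 : -2 < β) (hβ2 : β < -1) (k : ℕ) :
    ((k:ℝ) + 1) * a β (k+1) = ((k:ℝ) + 1 + β) * a β k := by
  have hne : ((k:ℝ) + 1 + β) ≠ 0 := arg_ne hβ1 hβ2 k
  have hfac : (Nat.factorial k : ℝ) ≠ 0 := Nat.cast_ne_zero.mpr (Nat.factorial_ne_zero k)
  unfold a
  rw [show ((k+1:ℕ):ℝ) + 1 + β = ((k:ℝ) + 1 + β) + 1 by push_cast; ring,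
      Real.Gamma_add_one hne, Nat.factorial_succ]
  push_cast
  field_simp

end BetaSplitAux

namespace BetaSplitAux
variable {β : ℝ}

lemma two_T (m : ℕ) :
    2 * (∑ k ∈ range (m+1), (k:ℝ) * (a β k * a β (m-k))) = (m:ℝ) * F β m := by
  have hrefl := Finset.sum_range_reflect (fun k => (k:ℝ) * (a β k * a β (m-k))) (m+1)
  simp only [Nat.add_sub_cancel] at hrefl
  rw [two_mul]
  nth_rewrite 1 [← hrefl]
  rw [← Finset.sum_add_distrib, F, Finset.mul_sum]
  apply Finset.sum_congr rfl
  intro j hj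
  have hjm : j ≤ m := Nat.lt_succ_iff.mp (Finset.mem_range.mp hj)
  rw [Nat.sub_sub_self hjm, Nat.cast_sub hjm]
  ring

lemma F_rec (hβ1 : -2 < β) (hβ2 : β < -1) (n : ℕ) :
    ((n:ℝ) + 1) * F β (n+1) = ((n:ℝ) + 2 + 2*β) * F β n := by
  have hS1 : ∑ k ∈ range ((n+1)+1), (k:ℝ) * (a β k * a β (n+1-k))
      = (1+β) * F β n + ∑ k ∈ range (n+1), (k:ℝ) * (a β k * a β (n-k)) := by
    rw [Finset.sum_range_succ' (fun k => (k:ℝ) * (a β k * a β (n+1-k))) (n+1)]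
    simp only [Nat.cast_zero, zero_mul, add_zero]
    rw [F, Finset.mul_sum, ← Finset.sum_add_distrib]
    apply Finset.sum_congr rfl
    intro i _
    have hni : n + 1 - (i+1) = n - i := by omega
    rw [hni]
    push_cast
    calc ((i:ℝ)+1) * (a β (i+1) * a β (n-i))
        = (((i:ℝ)+1) * a β (i+1)) * a β (n-i) := by ring
      _ = (((i:ℝ)+1+β) * a β i) * a β (n-i) := by rw [a_rec hβ1 hβ2 i]
      _ = (1+β) * (a β i * a β (n-i)) + (i:ℝ) * (a β i * a β (n-i)) := by ring
  have h1 := two_T (β := β) (n+1)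
  have h2 := two_T (β := β) n
  push_cast at h1
  linear_combination -1 * h1 + 2 * hS1 + h2

lemma Z_eq (n : ℕ) (hn : 2 ≤ n) :
    ∑ k ∈ Finset.Icc 1 (n-1),
      (Real.Gamma ((n : ℝ) - (k : ℝ) + 1 + β) / (Nat.factorial (n - k) : ℝ)) *
      (Real.Gamma ((k : ℝ) + 1 + β) / (Nat.factorial k : ℝ))
      = F β n - 2 * a β 0 * a β n := by
  have hIcc : Finset.Icc 1 (n-1) = Finset.Ico 1 n := by
    rw [← Finset.Ico_add_one_right_eq_Icc]; congr 1; omega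
  rw [hIcc]
  have hterm : ∀ k ∈ Finset.Ico 1 n,
      (Real.Gamma ((n : ℝ) - (k : ℝ) + 1 + β) / (Nat.factorial (n - k) : ℝ)) *
      (Real.Gamma ((k : ℝ) + 1 + β) / (Nat.factorial k : ℝ)) = a β k * a β (n - k) := by
    intro k hk
    obtain ⟨hk1, hk2⟩ := Finset.mem_Ico.mp hk
    have hcast : ((n - k : ℕ) : ℝ) = (n : ℝ) - (k : ℝ) := by
      rw [Nat.cast_sub hk2.le]
    unfold a
    rw [hcast]; ring
  rw [Finset.sum_congr rfl hterm]
  have e1 : F β n = a β 0 * a β n + (∑ k ∈ Finset.Ico 1 n, a β k * a β (n-k) + a β n * a β 0) := by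
    rw [F, Finset.range_eq_Ico, Finset.sum_eq_sum_Ico_succ_bot (by omega) _,
      Finset.sum_Ico_succ_top (by omega)]
    simp
  rw [e1]; ring


lemma hA (hβ1 : -2 < β) (hβ2 : β < -1) :
    Tendsto (fun n : ℕ => (n : ℝ) ^ (-β) * a β n) atTop (𝓝 1) := by
  set s : ℝ := 2 + β with hs_def
  have hs : 0 < s := by rw [hs_def]; linarith
  have hΓs : 0 < Real.Gamma s := Real.Gamma_pos_of_pos hs
  have hΓsn : ∀ n : ℕ, (0:ℝ) < Real.Gamma (s + n + 1) :=
    fun n => Real.Gamma_pos_of_pos (by positivity)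
  have prod_id : ∀ n : ℕ, ∏ j ∈ range (n+1), (s + (j:ℝ)) = Real.Gamma (s + n + 1) / Real.Gamma s := by
    intro n
    induction n with
    | zero =>
        rw [Finset.prod_range_one]
        simp only [Nat.cast_zero, add_zero]
        rw [Real.Gamma_add_one hs.ne', mul_div_assoc, div_self hΓs.ne', mul_one]
    | succ n ih =>
        rw [Finset.prod_range_succ, ih]
        have harg : s + (n:ℝ) + 1 ≠ 0 := by positivity
        rw [show s + ((n+1 : ℕ):ℝ) + 1 = (s + n + 1) + 1 by push_cast; ring,
          Real.Gamma_add_one harg]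
        field_simp
        push_cast; ring
  -- Q n := n^s n!/Γ(s+n+1) → 1
  have hQ : Tendsto (fun n : ℕ => (n:ℝ)^s * (Nat.factorial n : ℝ) / Real.Gamma (s + n + 1))
      atTop (𝓝 1) := by
    have h0 := (Real.GammaSeq_tendsto_Gamma s).div_const (Real.Gamma s)
    rw [div_self hΓs.ne'] at h0
    apply h0.congr
    intro n
    rw [Real.GammaSeq, prod_id n]
    rw [div_div_eq_mul_div, div_div, mul_comm (Real.Gamma (s + n + 1)) (Real.Gamma s),
      ← div_div, mul_div_assoc, div_self hΓs.ne', mul_one]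
  -- h2 : n*n/((n+1+β)(n+2+β)) → 1
  have t0 : Tendsto (fun n : ℕ => 1/(n:ℝ)) atTop (𝓝 0) := tendsto_one_div_atTop_nhds_zero_nat
  have t1 : Tendsto (fun n : ℕ => 1 + (1+β) * (1/(n:ℝ))) atTop (𝓝 1) := by
    simpa using tendsto_const_nhds.add (t0.const_mul (1+β))
  have t2 : Tendsto (fun n : ℕ => 1 + (2+β) * (1/(n:ℝ))) atTop (𝓝 1) := by
    simpa using tendsto_const_nhds.add (t0.const_mul (2+β))
  have h2 : Tendsto (fun n : ℕ => (n:ℝ) * (n:ℝ) / (((n:ℝ)+1+β) * ((n:ℝ)+2+β)))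
      atTop (𝓝 1) := by
    have t3 := (t1.mul t2).inv₀ (by norm_num)
    rw [show (((1:ℝ)*1))⁻¹ = 1 by norm_num] at t3
    apply t3.congr'
    filter_upwards [eventually_ge_atTop 1] with n hn
    have hn0 : (n:ℝ) ≠ 0 := by
      have : (1:ℝ) ≤ (n:ℝ) := by exact_mod_cast hn
      linarith
    rw [show (1:ℝ) + (1+β) * (1/(n:ℝ)) = ((n:ℝ)+1+β)/(n:ℝ) by field_simp; ring,
      show (1:ℝ) + (2+β) * (1/(n:ℝ)) = ((n:ℝ)+2+β)/(n:ℝ) by field_simp; ring,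
      div_mul_div_comm, inv_div]
  -- combine
  have hmain := (hQ.inv₀ one_ne_zero).mul h2
  rw [inv_one, one_mul] at hmain
  apply hmain.congr'
  filter_upwards [eventually_ge_atTop 1] with n hn
  have hn0 : (0:ℝ) < (n:ℝ) := by exact_mod_cast Nat.lt_of_lt_of_le Nat.zero_lt_one hn
  have hn1 : (1:ℝ) ≤ (n:ℝ) := by exact_mod_cast hn
  have hb1 : (0:ℝ) < (n:ℝ) + 1 + β := by linarith
  have hb2 : (0:ℝ) < (n:ℝ) + 2 + β := by linarith
  have eΓ : Real.Gamma (s + (n:ℝ) + 1)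
      = ((n:ℝ)+2+β) * (((n:ℝ)+1+β) * Real.Gamma ((n:ℝ)+1+β)) := by
    rw [show s + (n:ℝ) + 1 = ((n:ℝ)+2+β) + 1 by rw [hs_def]; ring,
      Real.Gamma_add_one hb2.ne',
      show (n:ℝ)+2+β = ((n:ℝ)+1+β) + 1 by ring,
      Real.Gamma_add_one hb1.ne']
  have key : (n:ℝ) ^ (-β) * (n:ℝ) ^ s = (n:ℝ) * (n:ℝ) := by
    rw [← Real.rpow_add hn0, show -β + s = ((2:ℕ):ℝ) by rw [hs_def]; push_cast; ring,
      Real.rpow_natCast]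
    ring
  have hns : (0:ℝ) < (n:ℝ) ^ s := Real.rpow_pos_of_pos hn0 s
  have hfac : (0:ℝ) < (Nat.factorial n : ℝ) := by
    exact_mod_cast Nat.factorial_pos n
  rw [eΓ]
  unfold a
  rw [inv_div, div_mul_div_comm, ← mul_div_assoc,
    div_eq_div_iff (by positivity) hfac.ne']
  linear_combination (-(Real.Gamma ((n:ℝ)+1+β) * (Nat.factorial n : ℝ) * ((n:ℝ)+1+β) * ((n:ℝ)+2+β))) * key



lemma hB (hβ1 : -2 < β) (hβ2 : β < -1) :
    Tendsto (fun n : ℕ => (n : ℝ) ^ (-β) * F β n) atTop (𝓝 0) := by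
  set d : ℝ := (3*β+1)/2 with hd
  have hd0 : d < 0 := by rw [hd]; linarith
  have hdβ : d - β < 0 := by rw [hd]; linarith
  obtain ⟨N, hN⟩ := eventually_atTop.mp
    ((eventually_ge_atTop 2).and
      (((tendsto_natCast_atTop_atTop (R := ℝ)).eventually_ge_atTop ((3*β+1)/(β+1))) :
        ∀ᶠ n : ℕ in atTop, (3*β+1)/(β+1) ≤ (n:ℝ)))
  have hN2 : 2 ≤ N := (hN N le_rfl).1
  have hNpos : (0:ℝ) < (N:ℝ) := by
    have : (0:ℕ) < N := by omega
    exact_mod_cast this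
  set C : ℝ := |F β N| * (N:ℝ) ^ (-d) with hC
  have hC0 : 0 ≤ C := by positivity
  -- induction bound
  have hclaim : ∀ n, N ≤ n → |F β n| ≤ C * (n:ℝ) ^ d := by
    intro n hn
    induction n, hn using Nat.le_induction with
    | base =>
        rw [hC, mul_assoc, ← Real.rpow_add hNpos]
        simp
    | succ n hn ih =>
        push_cast
        have h2n : 2 ≤ n := (hN n hn).1
        have hge := (hN n hn).2
        have hn0 : (0:ℝ) < (n:ℝ) := by
          have : (0:ℕ) < n := by omega
          exact_mod_cast this
        have hn1pos : (0:ℝ) < (n:ℝ) + 1 := by linarith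
        have hFrec := F_rec hβ1 hβ2 n
        have hFsucc : F β (n+1) = (((n:ℝ) + 2 + 2*β)/((n:ℝ)+1)) * F β n := by
          field_simp
          linarith [hFrec]
        have hrat_nonneg : 0 ≤ ((n:ℝ) + 2 + 2*β)/((n:ℝ)+1) := by
          apply div_nonneg _ hn1pos.le
          have : (2:ℝ) ≤ (n:ℝ) := by exact_mod_cast h2n
          linarith
        have habs : |F β (n+1)| = (((n:ℝ) + 2 + 2*β)/((n:ℝ)+1)) * |F β n| := by
          rw [hFsucc, abs_mul, abs_of_nonneg hrat_nonneg]
        -- ratio bound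
        have hβ1' : β + 1 < 0 := by linarith
        have hmul : (β+1) * (n:ℝ) ≤ 3*β+1 := by
          have h := mul_le_mul_of_nonpos_left hge hβ1'.le
          rwa [mul_div_cancel₀ _ hβ1'.ne] at h
        have hb := bern (p := d) (s := 1/(n:ℝ)) hd0.le (by positivity)
        rw [show (1:ℝ) + 1/(n:ℝ) = ((n:ℝ)+1)/(n:ℝ) by field_simp] at hb
        have hcmp : ((n:ℝ) + 2 + 2*β)/((n:ℝ)+1) ≤ 1 + d * (1/(n:ℝ)) := by
          rw [show (1:ℝ) + d * (1/(n:ℝ)) = ((n:ℝ)+d)/(n:ℝ) by field_simp,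
            div_le_div_iff₀ hn1pos hn0, hd]
          nlinarith [hmul]
        have hrat : ((n:ℝ) + 2 + 2*β)/((n:ℝ)+1) ≤ (((n:ℝ)+1)/(n:ℝ)) ^ d :=
          hcmp.trans hb
        calc |F β (n+1)| = (((n:ℝ) + 2 + 2*β)/((n:ℝ)+1)) * |F β n| := habs
          _ ≤ (((n:ℝ) + 2 + 2*β)/((n:ℝ)+1)) * (C * (n:ℝ) ^ d) := by
              exact mul_le_mul_of_nonneg_left ih hrat_nonneg
          _ ≤ (((n:ℝ)+1)/(n:ℝ)) ^ d * (C * (n:ℝ) ^ d) := by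
              apply mul_le_mul_of_nonneg_right hrat
              positivity
          _ = C * ((((n:ℝ)+1)/(n:ℝ)) ^ d * (n:ℝ) ^ d) := by ring
          _ = C * ((n:ℝ)+1) ^ d := by
              rw [← Real.mul_rpow (by positivity) hn0.le, div_mul_cancel₀ _ hn0.ne']
  -- squeeze
  have hg : Tendsto (fun n : ℕ => C * (n:ℝ) ^ (d - β)) atTop (𝓝 0) := by
    have h := (tendsto_rpow_neg_atTop (show (0:ℝ) < β - d by linarith)).comp
      (tendsto_natCast_atTop_atTop (R := ℝ))
    have h' := h.const_mul C
    rw [mul_zero] at h'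
    apply h'.congr
    intro n
    simp only [Function.comp_apply, neg_sub]
  apply squeeze_zero_norm' _ hg
  filter_upwards [eventually_ge_atTop N] with n hn
  have hn0 : (0:ℝ) < (n:ℝ) := by
    have : (0:ℕ) < n := by omega
    exact_mod_cast this
  have : ‖(n:ℝ) ^ (-β) * F β n‖ = (n:ℝ) ^ (-β) * |F β n| := by
    rw [Real.norm_eq_abs, abs_mul, abs_of_nonneg (by positivity : (0:ℝ) ≤ (n:ℝ) ^ (-β))]
  rw [this]
  calc (n:ℝ) ^ (-β) * |F β n| ≤ (n:ℝ) ^ (-β) * (C * (n:ℝ) ^ d) :=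
        mul_le_mul_of_nonneg_left (hclaim n hn) (by positivity)
    _ = C * (n:ℝ) ^ (d - β) := by
        rw [show d - β = -β + d by ring, Real.rpow_add hn0]
        ring

end BetaSplitAux


theorem beta_splitting_normalisation_limit (β : ℝ) (hβ1 : -2 < β) (hβ2 : β < -1) :
    Tendsto
      (fun n : ℕ => (n : ℝ) ^ (-β) *
        ∑ k ∈ Finset.Icc 1 (n - 1),
          (Real.Gamma ((n : ℝ) - (k : ℝ) + 1 + β) / (Nat.factorial (n - k) : ℝ)) *
          (Real.Gamma ((k : ℝ) + 1 + β) / (Nat.factorial k : ℝ)))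
      atTop
      (𝓝 (2 * Real.Gamma (2 + β) / (-1 - β))) := by
  have hA := BetaSplitAux.hA hβ1 hβ2
  have hB := BetaSplitAux.hB hβ1 hβ2
  have hcomb := hB.add (hA.const_mul (-2 * BetaSplitAux.a β 0))
  have hval : (0:ℝ) + -2 * BetaSplitAux.a β 0 * 1 = 2 * Real.Gamma (2 + β) / (-1 - β) := by
    unfold BetaSplitAux.a
    have h1 : (1:ℝ) + β ≠ 0 := by intro h; nlinarith
    have h2 : (-1:ℝ) - β ≠ 0 := by intro h; nlinarith
    rw [show (2:ℝ) + β = (1 + β) + 1 by ring, Real.Gamma_add_one h1]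
    simp only [Nat.cast_zero, Nat.factorial_zero, Nat.cast_one, zero_add]
    field_simp
    ring
  rw [hval] at hcomb
  apply hcomb.congr'
  filter_upwards [eventually_ge_atTop 2] with n hn
  rw [BetaSplitAux.Z_eq n hn]
  ring
end
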